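/- arXiv:2505.02724 — 13 statements merged into one kernel-verified Lean document; each statement's English description precedes it below -/
import Mathlib

section
/- Let L be a join-semilattice, let S ∈ Ind(L), and let l ∈ L with l ∉ S. Then there exists P ∈ Ind(L) with S ⊆ P and l ∉ P which is maximal (with respect to inclusion) among ind-objects containing S and not containing l; any such P belongs to X_L, i.e., the intersection of all ind-objects strictly containing P strictly contains P (indeed l lies in that intersection). -/
/-- An ind-object of a join-semilattice `L`: a nonempty, downward closed subset of `L`
closed under joins of two elements. -/
def IsIndObject {L : Type*} [SemilatticeSup L] (S : Set L) : Prop :=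
  S.Nonempty ∧ (∀ ⦃l s : L⦄, l ≤ s → s ∈ S → l ∈ S) ∧ ∀ ⦃a b : L⦄, a ∈ S → b ∈ S → a ⊔ b ∈ S

/-- `Ind(L)`, the set of ind-objects of `L`, partially ordered by inclusion. -/
abbrev IndObj (L : Type*) [SemilatticeSup L] := {S : Set L // IsIndObject S}

/-- The intersection of all ind-objects strictly containing `P`. -/
def indInterAbove {L : Type*} [SemilatticeSup L] (P : IndObj L) : Set L :=
  ⋂ (Q : IndObj L) (_ : P.1 ⊂ Q.1), Q.1

/-- Let `S ∈ Ind(L)` and `l ∈ L` with `l ∉ S`.  Then there exists `P ∈ Ind(L)` with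
`S ⊆ P` and `l ∉ P` which is maximal among ind-objects containing `S` and not containing
`l`; any such `P` belongs to `X_L`, i.e. the intersection of all ind-objects strictly
containing `P` strictly contains `P` (indeed `l` lies in that intersection). -/
theorem stmt_2 (L : Type*) [SemilatticeSup L] (S : IndObj L) (l : L) (hl : l ∉ S.1) :
    (∃ P : IndObj L, Maximal (fun Q : IndObj L => S.1 ⊆ Q.1 ∧ l ∉ Q.1) P) ∧
    (∀ P : IndObj L, Maximal (fun Q : IndObj L => S.1 ⊆ Q.1 ∧ l ∉ Q.1) P →
      l ∈ indInterAbove P ∧ P.1 ⊂ indInterAbove P) := by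
  have hzorn : ∀ c ⊆ {A : Set L | IsIndObject A ∧ S.1 ⊆ A ∧ l ∉ A},
      IsChain (· ⊆ ·) c → c.Nonempty →
      ∃ ub ∈ {A : Set L | IsIndObject A ∧ S.1 ⊆ A ∧ l ∉ A}, ∀ s ∈ c, s ⊆ ub := by
    intro c hcsub hchain hcne
    refine ⟨⋃₀ c, ⟨⟨?_, ?_, ?_⟩, ?_, ?_⟩, fun s hs => Set.subset_sUnion_of_mem hs⟩
    · obtain ⟨A, hA⟩ := hcne
      obtain ⟨x, hx⟩ := (hcsub hA).1.1
      exact ⟨x, A, hA, hx⟩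
    · rintro a s hle ⟨A, hA, hs⟩
      exact ⟨A, hA, (hcsub hA).1.2.1 hle hs⟩
    · rintro a b ⟨A, hA, ha⟩ ⟨B, hB, hb⟩
      rcases hchain.total hA hB with h | h
      · exact ⟨B, hB, (hcsub hB).1.2.2 (h ha) hb⟩
      · exact ⟨A, hA, (hcsub hA).1.2.2 ha (h hb)⟩
    · obtain ⟨A, hA⟩ := hcne
      exact (hcsub hA).2.1.trans (Set.subset_sUnion_of_mem hA)
    · rintro ⟨A, hA, hlA⟩
      exact (hcsub hA).2.2 hlA
  constructor
  · obtain ⟨m, hSm, hm⟩ := zorn_subset_nonempty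
        {A : Set L | IsIndObject A ∧ S.1 ⊆ A ∧ l ∉ A} hzorn S.1 ⟨S.2, subset_rfl, hl⟩
    refine ⟨⟨m, hm.prop.1⟩, ⟨hm.prop.2.1, hm.prop.2.2⟩, ?_⟩
    intro Q hQ hle
    exact hm.2 ⟨Q.2, hQ.1, hQ.2⟩ hle
  · intro P hP
    have hmem : l ∈ indInterAbove P := by
      refine Set.mem_iInter₂.2 fun Q hQ => ?_
      by_contra hlQ
      exact hQ.ne (le_antisymm hQ.subset
        (hP.2 ⟨hP.prop.1.trans hQ.subset, hlQ⟩ hQ.subset))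
    refine ⟨hmem, ⟨?_, fun hsub => hP.prop.2 (hsub hmem)⟩⟩
    exact fun x hx => Set.mem_iInter₂.2 fun Q hQ => hQ.subset hx
end

section
/- Let L be a join-semilattice. The map Ind(L) → 2^{X_L} sending an ind-object S to Supp(S) := {P ∈ X_L | S ⊄ P} is injective; moreover the map sending a subset Z ⊆ X_L to {l ∈ L | Supp(l) ⊆ Z} is a left inverse, i.e., for every S ∈ Ind(L) one has S = {l ∈ L | Supp(l) ⊆ Supp(S)}. -/
/-- `X_L`: the set of `P ∈ Ind(L)` such that the intersection of all ind-objects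
strictly containing `P` strictly contains `P`. -/
abbrev XL (L : Type*) [SemilatticeSup L] := {P : IndObj L // P.1 ⊂ indInterAbove P}

/-- `Supp(S) = {P ∈ X_L | S ⊄ P}` for an ind-object `S`. -/
def indSupp {L : Type*} [SemilatticeSup L] (S : IndObj L) : Set (XL L) :=
  {P : XL L | ¬ S.1 ⊆ P.1.1}

/-- `Supp(l) = {P ∈ X_L | l ∉ P}` for `l ∈ L`. -/
def ptSupp {L : Type*} [SemilatticeSup L] (l : L) : Set (XL L) :=
  {P : XL L | l ∉ P.1.1}

/-- Key lemma: if `S` is an ind-object and `l ∉ S`, there is `P ∈ X_L` with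
`S ⊆ P` and `l ∉ P`. -/
lemma exists_xl {L : Type*} [SemilatticeSup L] (S : IndObj L) {l : L} (hl : l ∉ S.1) :
    ∃ P : XL L, S.1 ⊆ P.1.1 ∧ l ∉ P.1.1 := by
  set 𝒜 : Set (Set L) := {T | IsIndObject T ∧ S.1 ⊆ T ∧ l ∉ T} with h𝒜
  have hzorn : ∀ c ⊆ 𝒜, IsChain (· ⊆ ·) c → c.Nonempty →
      ∃ ub ∈ 𝒜, ∀ s ∈ c, s ⊆ ub := by
    intro c hc hchain ⟨T, hT⟩
    refine ⟨⋃₀ c, ⟨⟨?_, ?_, ?_⟩, ?_, ?_⟩, fun s hs => Set.subset_sUnion_of_mem hs⟩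
    · obtain ⟨x, hx⟩ := (hc hT).1.1
      exact ⟨x, T, hT, hx⟩
    · rintro a b hab ⟨U, hU, hbU⟩
      exact ⟨U, hU, (hc hU).1.2.1 hab hbU⟩
    · rintro a b ⟨U, hU, haU⟩ ⟨V, hV, hbV⟩
      rcases hchain.total hU hV with h | h
      · exact ⟨V, hV, (hc hV).1.2.2 (h haU) hbV⟩
      · exact ⟨U, hU, (hc hU).1.2.2 haU (h hbV)⟩
    · exact (hc hT).2.1.trans (Set.subset_sUnion_of_mem hT)
    · rintro ⟨U, hU, hlU⟩
      exact (hc hU).2.2 hlU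
  obtain ⟨M, hSM, hMmax⟩ := zorn_subset_nonempty 𝒜 hzorn S.1 ⟨S.2, subset_rfl, hl⟩
  obtain ⟨hMind, hSM', hlM⟩ := hMmax.prop
  have hmax : ∀ Q : IndObj L, M ⊂ Q.1 → l ∈ Q.1 := by
    intro Q hQ
    by_contra hlQ
    have : Q.1 ∈ 𝒜 := ⟨Q.2, hSM'.trans hQ.le, hlQ⟩
    exact hQ.ne (hMmax.eq_of_le this hQ.le)
  refine ⟨⟨⟨M, hMind⟩, ?_⟩, hSM', hlM⟩
  constructor
  · intro x hx
    simp only [indInterAbove, Set.mem_iInter]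
    intro Q hQ
    exact hQ.le hx
  · intro hsub
    refine hlM (hsub ?_)
    simp only [indInterAbove, Set.mem_iInter]
    exact fun Q hQ => hmax Q hQ

/-- The map `Ind(L) → 2^{X_L}`, `S ↦ Supp(S) = {P ∈ X_L | S ⊄ P}`, is injective, and
`Z ↦ {l | Supp(l) ⊆ Z}` is a left inverse: `S = {l | Supp(l) ⊆ Supp(S)}` for every
`S ∈ Ind(L)`. -/
theorem stmt_3 (L : Type*) [SemilatticeSup L] :
    Function.Injective (fun S : IndObj L => indSupp S) ∧
    ∀ S : IndObj L, S.1 = {l : L | ptSupp l ⊆ indSupp S} := by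
  have key : ∀ S : IndObj L, S.1 = {l : L | ptSupp l ⊆ indSupp S} := by
    intro S
    ext l
    constructor
    · intro hl P hP
      exact fun hsub => hP (hsub hl)
    · intro hl
      by_contra hlS
      obtain ⟨P, hSP, hlP⟩ := exists_xl S hlS
      exact hl hlP hSP
  refine ⟨?_, key⟩
  intro S T h
  simp only at h
  apply Subtype.ext
  rw [key S, key T, h]
end

section
/- Let L be a join-semilattice. Then X_L, equipped with the map l ↦ Supp(l) and the topology whose closed sets are generated by {Supp(l) | l ∈ L}, is a support datum of L. In particular: Supp(l ⊔ l') = Supp(l) ∪ Supp(l') for all l, l' ∈ L; the induced map Ind(L) → 2^{X_L}, S ↦ ∪_{l∈S} Supp(l), is injective; and X_L is a T0 space, where for P, Q ∈ X_L one has Q ∈ closure({P}) if and only if Q ⊆ P. -/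
/-- The topology on `X_L` whose closed sets are generated by `{Supp(l) | l ∈ L}`. -/
instance XL.topologicalSpace (L : Type*) [SemilatticeSup L] : TopologicalSpace (XL L) :=
  .generateFrom {U : Set (XL L) | ∃ l : L, U = (ptSupp l)ᶜ}

open Set TopologicalSpace

lemma exists_xl_point {L : Type*} [SemilatticeSup L] (T : IndObj L) {l : L} (hl : l ∉ T.1) :
    ∃ P : XL L, T.1 ⊆ P.1.1 ∧ l ∉ P.1.1 := by
  obtain ⟨M, hTM, hM⟩ := zorn_subset_nonempty {A : Set L | IsIndObject A ∧ T.1 ⊆ A ∧ l ∉ A}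
    (fun c hc hchain hne => by
      obtain ⟨A0, hA0⟩ := hne
      refine ⟨⋃₀ c, ⟨⟨?_, ?_, ?_⟩, ?_, ?_⟩, fun s hs => subset_sUnion_of_mem hs⟩
      · obtain ⟨x, hx⟩ := (hc hA0).1.1
        exact ⟨x, A0, hA0, hx⟩
      · rintro a s hle ⟨A, hA, hsA⟩
        exact ⟨A, hA, (hc hA).1.2.1 hle hsA⟩
      · rintro a b ⟨A, hA, haA⟩ ⟨B, hB, hbB⟩
        rcases hchain.total hA hB with h | h
        · exact ⟨B, hB, (hc hB).1.2.2 (h haA) hbB⟩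
        · exact ⟨A, hA, (hc hA).1.2.2 haA (h hbB)⟩
      · exact (hc hA0).2.1.trans (subset_sUnion_of_mem hA0)
      · rintro ⟨A, hA, hlA⟩
        exact (hc hA).2.2 hlA)
    T.1 ⟨T.2, subset_rfl, hl⟩
  have hind : IsIndObject M := hM.prop.1
  have hlM : l ∉ M := hM.prop.2.2
  have hTsub : T.1 ⊆ M := hM.prop.2.1
  have hlI : l ∈ indInterAbove ⟨M, hind⟩ := by
    refine mem_iInter₂.mpr fun Q hQ => ?_
    by_contra hlQ
    exact hQ.2 (hM.le_of_ge ⟨Q.2, hTsub.trans hQ.1, hlQ⟩ hQ.1)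
  refine ⟨⟨⟨M, hind⟩, ⟨fun x hx => mem_iInter₂.mpr fun Q hQ => hQ.1 hx,
    fun h => hlM (h hlI)⟩⟩, hTsub, hlM⟩

lemma isOpen_compl_ptSupp {L : Type*} [SemilatticeSup L] (l : L) :
    IsOpen ((ptSupp (L := L) l)ᶜ) :=
  TopologicalSpace.GenerateOpen.basic _ ⟨l, rfl⟩

lemma mem_closure_singleton_iff {L : Type*} [SemilatticeSup L] (P Q : XL L) :
    Q ∈ closure {P} ↔ Q.1.1 ⊆ P.1.1 := by
  rw [mem_closure_iff]
  constructor
  · intro h l hlQ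
    have := h (ptSupp l)ᶜ (isOpen_compl_ptSupp l) (by simpa [ptSupp] using hlQ)
    obtain ⟨x, hx1, hx2⟩ := this
    rcases hx2 with rfl
    simpa [ptSupp] using hx1
  · intro hQP o ho hQo
    refine ⟨P, ?_, rfl⟩
    induction ho with
    | basic U hU =>
      obtain ⟨l, rfl⟩ := hU
      have : l ∈ Q.1.1 := by simpa [ptSupp] using hQo
      simpa [ptSupp] using hQP this
    | univ => trivial
    | inter U V _ _ ihU ihV => exact ⟨ihU hQo.1, ihV hQo.2⟩
    | sUnion S _ ih =>
      obtain ⟨U, hU, hQU⟩ := hQo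
      exact ⟨U, hU, ih U hU hQU⟩

/-- `X_L`, with `l ↦ Supp(l)` and the topology whose closed sets are generated by the
`Supp(l)`, is a support datum of `L`: `Supp(l ⊔ l') = Supp(l) ∪ Supp(l')`, the induced
map `Ind(L) → 2^{X_L}`, `S ↦ ⋃_{l ∈ S} Supp(l)`, is injective, and `X_L` is a T0 space,
where `Q ∈ closure {P}` iff `Q ⊆ P`. -/
theorem stmt_4 (L : Type*) [SemilatticeSup L] :
    (∀ l l' : L, ptSupp (l ⊔ l') = ptSupp l ∪ ptSupp l') ∧
    Function.Injective (fun S : IndObj L => ⋃ l ∈ S.1, ptSupp l) ∧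
    T0Space (XL L) ∧
    (∀ P Q : XL L, Q ∈ closure {P} ↔ Q.1.1 ⊆ P.1.1) := by
  refine ⟨?_, ?_, ?_, fun P Q => mem_closure_singleton_iff P Q⟩
  · intro l l'
    ext P
    have h1 := P.1.2.2.1
    have h2 := P.1.2.2.2
    simp only [ptSupp, Set.mem_setOf_eq, Set.mem_union]
    constructor
    · intro h
      by_contra hc
      push_neg at hc
      exact h (h2 hc.1 hc.2)
    · rintro (h | h) hs
      · exact h (h1 le_sup_left hs)
      · exact h (h1 le_sup_right hs)
  · intro S T hST
    have key : ∀ (A B : IndObj L),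
        (⋃ l ∈ A.1, ptSupp l) = (⋃ l ∈ B.1, ptSupp l) → A.1 ⊆ B.1 := by
      intro A B hAB l hlA
      by_contra hlB
      obtain ⟨P, hBP, hlP⟩ := exists_xl_point B hlB
      have hP : P ∈ ⋃ m ∈ A.1, ptSupp m := Set.mem_biUnion hlA hlP
      rw [hAB] at hP
      obtain ⟨m, hmB, hmP⟩ := Set.mem_iUnion₂.mp hP
      exact hmP (hBP hmB)
    exact Subtype.ext ((key S T hST).antisymm (key T S hST.symm))
  · refine t0Space_iff_inseparable _ |>.mpr fun P Q h => ?_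
    obtain ⟨h1, h2⟩ := inseparable_iff_mem_closure.mp h
    exact Subtype.ext (Subtype.ext (((mem_closure_singleton_iff Q P).mp h1).antisymm
      ((mem_closure_singleton_iff P Q).mp h2)))
end

section
/- Let L be a join-semilattice and let (Y, Supp_Y) be any support datum of L. Then there exists a map of support data f: X_L → Y, i.e., a continuous map with f^{-1}(Supp_Y(l)) = Supp(l) for every l ∈ L. Such a map can be obtained by sending each P ∈ X_L to a point of Supp_Y(P̄) \ Supp_Y(P), where P̄ denotes the intersection of all ind-objects strictly containing P and Supp_Y is extended to Ind(L) by Supp_Y(S) = ∪_{l∈S} Supp_Y(l); this difference set is nonempty. -/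
/-- For any support datum `(Y, Supp_Y)` of `L`, there exists a map of support data
`f : X_L → Y`, i.e. a continuous map with `f ⁻¹(Supp_Y l) = Supp l` for all `l`; it can
be obtained by sending `P` to a point of `Supp_Y(P̄) \ Supp_Y(P)` (this difference being
nonempty), where `P̄` is the intersection of all ind-objects strictly containing `P` and
`Supp_Y` is extended to subsets by unions. -/
theorem stmt_5 (L : Type*) [SemilatticeSup L] (Y : Type*) [tY : TopologicalSpace Y]
    [T0Space Y] (sY : L → Set Y)
    (hjoin : ∀ l l' : L, sY (l ⊔ l') = sY l ∪ sY l')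
    (hinj : Function.Injective (fun S : IndObj L => ⋃ l ∈ S.1, sY l))
    (htop : tY = TopologicalSpace.generateFrom {U : Set Y | ∃ l : L, U = (sY l)ᶜ}) :
    (∀ P : XL L, ((⋃ l ∈ indInterAbove P.1, sY l) \ (⋃ l ∈ P.1.1, sY l)).Nonempty) ∧
    ∃ f : XL L → Y, Continuous f ∧ (∀ l : L, f ⁻¹' sY l = ptSupp l) ∧
      ∀ P : XL L, f P ∈ (⋃ l ∈ indInterAbove P.1, sY l) \ (⋃ l ∈ P.1.1, sY l) := by
  subst htop
  have hmono : ∀ {l m : L}, l ≤ m → sY l ⊆ sY m := by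
    intro l m h
    have h2 : sY m = sY l ∪ sY m := by rw [← hjoin, sup_eq_right.mpr h]
    rw [h2]; exact Set.subset_union_left
  have hsubPbar : ∀ P : XL L, P.1.1 ⊆ indInterAbove P.1 := fun P => P.2.1
  have hbar : ∀ P : XL L, IsIndObject (indInterAbove P.1) := by
    intro P
    refine ⟨?_, ?_, ?_⟩
    · obtain ⟨x, hx⟩ := P.1.2.1
      exact ⟨x, hsubPbar P hx⟩
    · intro l s hls hs
      simp only [indInterAbove, Set.mem_iInter] at hs ⊢
      intro Q hQ; exact Q.2.2.1 hls (hs Q hQ)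
    · intro a b ha hb
      simp only [indInterAbove, Set.mem_iInter] at ha hb ⊢
      intro Q hQ; exact Q.2.2.2 (ha Q hQ) (hb Q hQ)
  have hne : ∀ P : XL L,
      ((⋃ l ∈ indInterAbove P.1, sY l) \ (⋃ l ∈ P.1.1, sY l)).Nonempty := by
    intro P
    rw [Set.diff_nonempty]
    intro hsub
    have hsub' : (⋃ l ∈ P.1.1, sY l) ⊆ ⋃ l ∈ indInterAbove P.1, sY l := by
      refine Set.iUnion₂_subset fun l hl => ?_
      exact Set.subset_iUnion₂_of_subset l (hsubPbar P hl) subset_rfl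
    have heq : (⟨indInterAbove P.1, hbar P⟩ : IndObj L) = P.1 :=
      hinj (by simpa using le_antisymm hsub hsub')
    have hval : indInterAbove P.1 = P.1.1 := congrArg Subtype.val heq
    exact P.2.2 hval.subset
  set f : XL L → Y := fun P => (hne P).choose with hf
  have hspec : ∀ P : XL L,
      f P ∈ (⋃ l ∈ indInterAbove P.1, sY l) \ (⋃ l ∈ P.1.1, sY l) :=
    fun P => (hne P).choose_spec
  have hkey : ∀ (P : XL L) (l : L), f P ∈ sY l ↔ l ∉ P.1.1 := by
    intro P l
    constructor
    · intro hmem hl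
      exact (hspec P).2 (Set.mem_biUnion hl hmem)
    · intro hl
      -- the ind-object generated by P and l
      set Q : Set L := {m | ∃ p ∈ P.1.1, m ≤ p ⊔ l} with hQdef
      have hQind : IsIndObject Q := by
        refine ⟨?_, ?_, ?_⟩
        · obtain ⟨x, hx⟩ := P.1.2.1
          exact ⟨x, x, hx, le_sup_left⟩
        · rintro m s hms ⟨p, hp, hs⟩
          exact ⟨p, hp, hms.trans hs⟩
        · rintro a b ⟨p, hp, ha⟩ ⟨q, hq, hb⟩
          refine ⟨p ⊔ q, P.1.2.2.2 hp hq, ?_⟩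
          exact sup_le (ha.trans (sup_le_sup le_sup_left le_rfl))
            (hb.trans (sup_le_sup le_sup_right le_rfl))
      have hPQ : P.1.1 ⊂ Q := by
        constructor
        · intro p hp; exact ⟨p, hp, le_sup_left⟩
        · intro hQP
          obtain ⟨x, hx⟩ := P.1.2.1
          exact hl (hQP ⟨x, hx, le_sup_right⟩)
      have hbarQ : indInterAbove P.1 ⊆ Q := by
        intro m hm
        simp only [indInterAbove, Set.mem_iInter] at hm
        exact hm ⟨Q, hQind⟩ hPQ
      obtain ⟨m, hmbar, hfm⟩ := Set.mem_iUnion₂.mp (hspec P).1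
      obtain ⟨p, hp, hmp⟩ := hbarQ hmbar
      have : f P ∈ sY p ∪ sY l := by
        rw [← hjoin]; exact hmono hmp hfm
      rcases this with h | h
      · exact absurd (Set.mem_biUnion hp h) (hspec P).2
      · exact h
  refine ⟨hne, f, ?_, ?_, hspec⟩
  · apply continuous_generateFrom_iff.mpr
    rintro U ⟨l, rfl⟩
    have hpre : f ⁻¹' (sY l)ᶜ = (ptSupp l)ᶜ := by
      ext P
      simp [ptSupp, hkey P l]
    rw [hpre]
    exact TopologicalSpace.GenerateOpen.basic _ ⟨l, rfl⟩
  · intro l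
    ext P
    simp [ptSupp, hkey P l]
end

section
/- Let L be a join-semilattice and let (Y, Supp_Y) be a support datum of L. Then the map Y → 2^L sending y to {l ∈ L | y ∉ Supp_Y(l)} is injective. Consequently, for any two support data X and Y of L, there is at most one map of support data from X to Y. -/
universe u

/-- Let `(Y, Supp_Y)` be a support datum of `L`.  Then `y ↦ {l ∈ L | y ∉ Supp_Y l}` is
injective.  Consequently, for any two support data `X` and `Y` of `L` there is at most
one map of support data from `X` to `Y`. -/
theorem stmt_6 (L : Type*) [SemilatticeSup L] (Y : Type*) [tY : TopologicalSpace Y]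
    [T0Space Y] (sY : L → Set Y)
    (hjoinY : ∀ l l' : L, sY (l ⊔ l') = sY l ∪ sY l')
    (hinjY : Function.Injective (fun S : IndObj L => ⋃ l ∈ S.1, sY l))
    (htopY : tY = TopologicalSpace.generateFrom {U : Set Y | ∃ l : L, U = (sY l)ᶜ}) :
    Function.Injective (fun y : Y => {l : L | y ∉ sY l}) ∧
    ∀ (X : Type u) (tX : TopologicalSpace X), @T0Space X tX →
      ∀ sX : L → Set X,
        (∀ l l' : L, sX (l ⊔ l') = sX l ∪ sX l') →
        Function.Injective (fun S : IndObj L => ⋃ l ∈ S.1, sX l) →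
        tX = TopologicalSpace.generateFrom {U : Set X | ∃ l : L, U = (sX l)ᶜ} →
        ∀ f g : X → Y, @Continuous X Y tX tY f → @Continuous X Y tX tY g →
          (∀ l : L, f ⁻¹' sY l = sX l) → (∀ l : L, g ⁻¹' sY l = sX l) → f = g := by
  have key : ∀ y₁ y₂ : Y, (∀ l, y₁ ∈ sY l ↔ y₂ ∈ sY l) → y₁ = y₂ := by
    intro y₁ y₂ h
    have hins : Inseparable y₁ y₂ := by
      rw [inseparable_iff_forall_isOpen]
      intro U hU
      rw [htopY] at hU
      induction hU with
      | basic U hU => obtain ⟨l, rfl⟩ := hU; simp [h l]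
      | univ => simp
      | inter U V _ _ ihU ihV => simp only [Set.mem_inter_iff, ihU, ihV]
      | sUnion S _ ih =>
        simp only [Set.mem_sUnion]
        exact ⟨fun ⟨t, ht, hx⟩ => ⟨t, ht, (ih t ht).mp hx⟩,
               fun ⟨t, ht, hx⟩ => ⟨t, ht, (ih t ht).mpr hx⟩⟩
    exact hins.eq
  constructor
  · intro y₁ y₂ h
    apply key
    intro l
    have := Set.ext_iff.mp h l
    simp only [Set.mem_setOf_eq] at this
    exact not_iff_not.mp this
  · intro X tX _ sX _ _ _ f g _ _ hf hg
    funext x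
    apply key
    intro l
    constructor
    · intro hx
      have : x ∈ sX l := by rw [← hf l]; exact hx
      rw [← hg l] at this; exact this
    · intro hx
      have : x ∈ sX l := by rw [← hg l]; exact hx
      rw [← hf l] at this; exact this
end

section
/- For every join-semilattice L, the space X_L, equipped with the support map l ↦ Supp(l) = {P ∈ X_L | l ∉ P}, is the universal support datum of L: it is a support datum, and for every support datum (Y, Supp_Y) of L there exists a unique map of support data X_L → Y. -/
universe u

section Aux

variable {L : Type*} [SemilatticeSup L]

lemma IsIndObject.sup_mem_iff {S : Set L} (h : IsIndObject S) {a b : L} :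
    a ⊔ b ∈ S ↔ a ∈ S ∧ b ∈ S :=
  ⟨fun H => ⟨h.2.1 le_sup_left H, h.2.1 le_sup_right H⟩, fun ⟨ha, hb⟩ => h.2.2 ha hb⟩

lemma subset_indInterAbove (P : IndObj L) : P.1 ⊆ indInterAbove P := fun x hx =>
  Set.mem_iInter₂.mpr fun Q hQ => hQ.1 hx

lemma exists_point {T : Set L} (hT : IsIndObject T) {l : L} (hl : l ∉ T) :
    ∃ P : XL L, T ⊆ P.1.1 ∧ l ∉ P.1.1 := by
  have hZ : ∀ c ⊆ {S : Set L | IsIndObject S ∧ T ⊆ S ∧ l ∉ S}, IsChain (· ⊆ ·) c →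
      c.Nonempty → ∃ ub ∈ {S : Set L | IsIndObject S ∧ T ⊆ S ∧ l ∉ S}, ∀ s ∈ c, s ⊆ ub := by
    intro c hc hchain hcne
    refine ⟨⋃₀ c, ⟨⟨?_, ?_, ?_⟩, ?_, ?_⟩, fun s hs => Set.subset_sUnion_of_mem hs⟩
    · obtain ⟨s, hs⟩ := hcne
      obtain ⟨x, hx⟩ := (hc hs).1.1
      exact ⟨x, s, hs, hx⟩
    · rintro a b hab ⟨s, hs, hbs⟩
      exact ⟨s, hs, (hc hs).1.2.1 hab hbs⟩
    · rintro a b ⟨s, hs, has⟩ ⟨t, ht, hbt⟩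
      rcases hchain.total hs ht with h | h
      · exact ⟨t, ht, (hc ht).1.2.2 (h has) hbt⟩
      · exact ⟨s, hs, (hc hs).1.2.2 has (h hbt)⟩
    · obtain ⟨s, hs⟩ := hcne
      exact (hc hs).2.1.trans (Set.subset_sUnion_of_mem hs)
    · rintro ⟨s, hs, hls⟩
      exact (hc hs).2.2 hls
  obtain ⟨M, hTM, hMmax⟩ := zorn_subset_nonempty
      {S : Set L | IsIndObject S ∧ T ⊆ S ∧ l ∉ S} hZ T ⟨hT, subset_rfl, hl⟩
  obtain ⟨hMind, -, hlM⟩ := hMmax.prop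
  have hmax : ∀ Q : Set L, (IsIndObject Q ∧ T ⊆ Q ∧ l ∉ Q) → M ⊆ Q → Q = M :=
    fun Q hQ hMQ => (hMmax.2 hQ hMQ).antisymm hMQ
  have hlabove : l ∈ indInterAbove ⟨M, hMind⟩ := by
    refine Set.mem_iInter₂.mpr fun Q hQ => ?_
    by_contra hlQ
    exact hQ.2 ((hmax Q.1 ⟨Q.2, hTM.trans hQ.1, hlQ⟩ hQ.1) ▸ subset_rfl)
  refine ⟨⟨⟨M, hMind⟩, ⟨subset_indInterAbove _, fun h => hlM (h hlabove)⟩⟩, hTM, hlM⟩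

lemma xl_injective :
    Function.Injective (fun S : IndObj L => ⋃ l ∈ S.1, ptSupp l) := by
  have key : ∀ S T : IndObj L,
      (⋃ l ∈ S.1, ptSupp l) = (⋃ l ∈ T.1, ptSupp l) → S.1 ⊆ T.1 := by
    intro S T h l hlS
    by_contra hlT
    obtain ⟨P, hTP, hlP⟩ := exists_point T.2 hlT
    have hP : P ∈ ⋃ l ∈ S.1, ptSupp l :=
      Set.mem_iUnion₂.mpr ⟨l, hlS, hlP⟩
    rw [h] at hP
    obtain ⟨l', hl'T, hl'P⟩ := Set.mem_iUnion₂.mp hP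
    exact hl'P (hTP hl'T)
  intro S T h
  exact Subtype.ext ((key S T h).antisymm (key T S h.symm))

lemma xl_t0 : T0Space (XL L) := by
  refine t0Space_iff_inseparable (XL L) |>.mpr fun P Q h => ?_
  have hopen : ∀ l : L, IsOpen ((ptSupp (L := L) l)ᶜ) := fun l =>
    TopologicalSpace.GenerateOpen.basic _ ⟨l, rfl⟩
  have : ∀ l : L, l ∈ P.1.1 ↔ l ∈ Q.1.1 := by
    intro l
    have := (inseparable_iff_forall_isOpen.mp h) _ (hopen l)
    simpa [ptSupp, not_not] using this
  exact Subtype.ext (Subtype.ext (Set.ext this))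

end Aux

/-- `X_L`, with the support map `l ↦ Supp(l) = {P ∈ X_L | l ∉ P}`, is the universal
support datum of `L`: it is a support datum, and for every support datum `(Y, Supp_Y)`
of `L` there exists a unique map of support data `X_L → Y`. -/
theorem stmt_7 (L : Type*) [SemilatticeSup L] :
    ((∀ l l' : L, ptSupp (l ⊔ l') = ptSupp l ∪ ptSupp l') ∧
      Function.Injective (fun S : IndObj L => ⋃ l ∈ S.1, ptSupp l) ∧
      T0Space (XL L) ∧
      XL.topologicalSpace L =
        TopologicalSpace.generateFrom {U : Set (XL L) | ∃ l : L, U = (ptSupp l)ᶜ}) ∧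
    ∀ (Y : Type u) (tY : TopologicalSpace Y), @T0Space Y tY →
      ∀ sY : L → Set Y,
        (∀ l l' : L, sY (l ⊔ l') = sY l ∪ sY l') →
        Function.Injective (fun S : IndObj L => ⋃ l ∈ S.1, sY l) →
        tY = TopologicalSpace.generateFrom {U : Set Y | ∃ l : L, U = (sY l)ᶜ} →
        ∃! f : XL L → Y,
          @Continuous (XL L) Y (XL.topologicalSpace L) tY f ∧
          ∀ l : L, f ⁻¹' sY l = ptSupp l := by
  constructor
  · refine ⟨?_, xl_injective, xl_t0, rfl⟩
    intro l l'
    ext P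
    simp [ptSupp, P.1.2.sup_mem_iff, -not_and, not_and_or]
  · intro Y tY hT0 sY hsup hinj htY
    subst htY
    letI : TopologicalSpace Y := TopologicalSpace.generateFrom {U : Set Y | ∃ l : L, U = (sY l)ᶜ}
    haveI : T0Space Y := hT0
    -- monotonicity of sY
    have hmono : ∀ {l s : L}, l ≤ s → sY l ⊆ sY s := by
      intro l s hls
      have : sY s = sY l ∪ sY s := by
        rw [← hsup, sup_eq_right.mpr hls]
      rw [this]; exact Set.subset_union_left
    -- uniqueness of points of Y with a given ind-object of non-supports
    have huniq : ∀ y y' : Y, (∀ l : L, y ∈ sY l ↔ y' ∈ sY l) → y = y' := by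
      intro y y' h
      refine Inseparable.eq (inseparable_iff_forall_isOpen.mpr fun U hU => ?_)
      induction hU with
      | basic U hU => obtain ⟨l, rfl⟩ := hU; simp [h l]
      | univ => simp
      | inter U V _ _ hU hV => simp [Set.mem_inter_iff, hU, hV]
      | sUnion S _ hS =>
          simp only [Set.mem_sUnion]
          exact ⟨fun ⟨t, ht, hyt⟩ => ⟨t, ht, (hS t ht).mp hyt⟩,
                 fun ⟨t, ht, hyt⟩ => ⟨t, ht, (hS t ht).mpr hyt⟩⟩
    -- existence of a point of Y for each P ∈ X_L
    have hexist : ∀ P : XL L, ∃ y : Y, ∀ l : L, y ∈ sY l ↔ l ∉ P.1.1 := by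
      intro P
      obtain ⟨hPsub, hPne⟩ := P.2
      obtain ⟨l₀, hl₀I, hl₀P⟩ : ∃ l₀, l₀ ∈ indInterAbove P.1 ∧ l₀ ∉ P.1.1 := by
        by_contra h
        push_neg at h
        exact hPne fun x hx => h x hx
      set P' : Set L := {m | ∃ p ∈ P.1.1, m ≤ p ⊔ l₀} with hP'def
      have hP'ind : IsIndObject P' := by
        refine ⟨?_, ?_, ?_⟩
        · obtain ⟨p, hp⟩ := P.1.2.1
          exact ⟨p, p, hp, le_sup_left⟩
        · rintro a b hab ⟨p, hp, hbp⟩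
          exact ⟨p, hp, hab.trans hbp⟩
        · rintro a b ⟨p, hp, hap⟩ ⟨q, hq, hbq⟩
          refine ⟨p ⊔ q, P.1.2.2.2 hp hq, ?_⟩
          calc a ⊔ b ≤ (p ⊔ l₀) ⊔ (q ⊔ l₀) := sup_le_sup hap hbq
            _ = (p ⊔ q) ⊔ l₀ := by rw [sup_sup_sup_comm, sup_idem]
      have hPP' : P.1.1 ⊆ P' := fun m hm => ⟨m, hm, le_sup_left⟩
      have hl₀P' : l₀ ∈ P' := by
        obtain ⟨p, hp⟩ := P.1.2.1
        exact ⟨p, hp, le_sup_right⟩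
      have hne : (⋃ l ∈ P.1.1, sY l) ≠ (⋃ l ∈ P', sY l) := by
        intro h
        have := hinj (a₁ := P.1) (a₂ := ⟨P', hP'ind⟩) h
        rw [this] at hl₀P
        exact hl₀P hl₀P'
      have hsubU : (⋃ l ∈ P.1.1, sY l) ⊆ ⋃ l ∈ P', sY l :=
        Set.iUnion₂_mono' fun l hl => ⟨l, hPP' hl, subset_rfl⟩
      obtain ⟨y, hyP', hyP⟩ : ∃ y, y ∈ (⋃ l ∈ P', sY l) ∧ y ∉ ⋃ l ∈ P.1.1, sY l := by
        by_contra h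
        push_neg at h
        exact hne (hsubU.antisymm h)
      obtain ⟨l₁, hl₁P', hyl₁⟩ := Set.mem_iUnion₂.mp hyP'
      have hyNP : ∀ l ∈ P.1.1, y ∉ sY l := fun l hl hyl =>
        hyP (Set.mem_iUnion₂.mpr ⟨l, hl, hyl⟩)
      -- Sy = {l | y ∉ sY l}
      set Sy : Set L := {l | y ∉ sY l} with hSydef
      have hSyind : IsIndObject Sy := by
        refine ⟨?_, ?_, ?_⟩
        · obtain ⟨p, hp⟩ := P.1.2.1
          exact ⟨p, hyNP p hp⟩
        · intro a b hab hb hya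
          exact hb (hmono hab hya)
        · intro a b ha hb hy
          rw [hsup] at hy
          rcases hy with hy | hy
          · exact ha hy
          · exact hb hy
      have hPSy : P.1.1 ⊆ Sy := fun l hl => hyNP l hl
      have hSyP : Sy = P.1.1 := by
        by_contra hneq
        have hstrict : P.1.1 ⊂ Sy := ⟨hPSy, fun h => hneq (h.antisymm hPSy)⟩
        have hl₀Sy : l₀ ∈ Sy :=
          Set.mem_iInter₂.mp hl₀I ⟨Sy, hSyind⟩ hstrict
        obtain ⟨p, hp, hl₁p⟩ := hl₁P'
        have : y ∈ sY (p ⊔ l₀) := hmono hl₁p hyl₁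
        rw [hsup] at this
        rcases this with h | h
        · exact hyNP p hp h
        · exact hl₀Sy h
      refine ⟨y, fun l => ?_⟩
      constructor
      · intro hyl hlP
        exact hyNP l hlP hyl
      · intro hlP
        by_contra hyl
        have : l ∈ Sy := hyl
        rw [hSyP] at this
        exact hlP this
    choose f hf using hexist
    have hfl : ∀ l : L, f ⁻¹' sY l = ptSupp l := by
      intro l
      ext P
      exact hf P l
    have hcont : @Continuous (XL L) Y (XL.topologicalSpace L)
        (TopologicalSpace.generateFrom {U : Set Y | ∃ l : L, U = (sY l)ᶜ}) f := by
      rw [continuous_generateFrom_iff]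
      rintro U ⟨l, rfl⟩
      rw [Set.preimage_compl, hfl l]
      exact TopologicalSpace.GenerateOpen.basic _ ⟨l, rfl⟩
    refine ⟨f, ⟨hcont, hfl⟩, ?_⟩
    rintro g ⟨-, hg⟩
    funext P
    refine huniq (g P) (f P) fun l => ?_
    have h1 : g P ∈ sY l ↔ P ∈ ptSupp l := by
      rw [← hg l]; rfl
    rw [h1, hf P l]; rfl
end

section
/- Let T be a pretriangulated category and S a set of thick subcategories of T closed under unions of chains. Let I ∈ S and let a be an object of T with a ∉ I. Then there exists an S-prime P ∈ S with I ⊆ P and a ∉ P. -/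
open CategoryTheory CategoryTheory.Limits CategoryTheory.Pretriangulated

universe v u

/-- A thick subcategory of a pretriangulated category, viewed as a class of objects:
it contains the zero objects and is closed under isomorphisms, shifts in both
directions, extensions, and retracts. -/
structure IsThickSubcat {C : Type u} [Category.{v} C] [Preadditive C] [HasZeroObject C]
    [HasShift C ℤ] [∀ n : ℤ, (shiftFunctor C n).Additive] [Pretriangulated C]
    (P : Set C) : Prop where
  zero_mem : ∀ X : C, IsZero X → X ∈ P
  iso_mem : ∀ {X Y : C}, (X ≅ Y) → X ∈ P → Y ∈ P
  shift_mem : ∀ (X : C) (n : ℤ), X ∈ P → X⟦n⟧ ∈ P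
  ext_mem : ∀ T ∈ distTriang C, T.obj₁ ∈ P → T.obj₃ ∈ P → T.obj₂ ∈ P
  retract_mem : ∀ (X Y : C), X ∈ P → ∀ (i : Y ⟶ X) (r : X ⟶ Y), i ≫ r = 𝟙 Y → Y ∈ P

/-- Let `S` be a set of thick subcategories of `T` closed under unions of chains, let
`I ∈ S` and let `a ∉ I`.  Then there exists an `S`-prime `P ∈ S` (the intersection of
all members of `S` strictly containing `P` strictly contains `P`) with `I ⊆ P` and
`a ∉ P`. -/
theorem stmt_8 (C : Type u) [Category.{v} C] [Preadditive C] [HasZeroObject C]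
    [HasShift C ℤ] [∀ n : ℤ, (shiftFunctor C n).Additive] [Pretriangulated C]
    (S : Set (Set C)) (hthick : ∀ I ∈ S, IsThickSubcat I)
    (hchain : ∀ 𝒞 ⊆ S, 𝒞.Nonempty → IsChain (· ⊆ ·) 𝒞 → ⋃₀ 𝒞 ∈ S)
    (I : Set C) (hI : I ∈ S) (a : C) (ha : a ∉ I) :
    ∃ P : Set C, P ∈ S ∧ I ⊆ P ∧ a ∉ P ∧
      P ⊂ ⋂₀ {Q : Set C | Q ∈ S ∧ P ⊂ Q} := by
  obtain ⟨P, hIP, hPmax⟩ := zorn_subset_nonempty {P | P ∈ S ∧ a ∉ P}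
    (fun c hc hchain' hne => ⟨⋃₀ c, ⟨hchain c (fun x hx => (hc hx).1) hne
      hchain',
      by rintro ⟨t, ht, hat⟩; exact (hc ht).2 hat⟩,
      fun s hs => Set.subset_sUnion_of_mem hs⟩) I ⟨hI, ha⟩
  obtain ⟨hPS, haP⟩ := hPmax.prop
  refine ⟨P, hPS, hIP, haP, ⟨fun x hx Q hQ => hQ.2.1 hx, fun hsub => haP (hsub ?_)⟩⟩
  intro Q hQ
  by_contra haQ
  exact (hQ.2.2 (hPmax.le_of_ge ⟨hQ.1, haQ⟩ hQ.2.1)).elim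
end

section
/- Let T be a pretriangulated category and S a set of thick subcategories of T closed under unions of chains. The map S → 2^{Spc(T,S)} sending I ∈ S to Supp(I) := {P ∈ Spc(T,S) | I ⊄ P} is injective. If moreover S is closed under arbitrary intersections, then the map sending a subset Z ⊆ Spc(T,S) to {a ∈ T | Supp(a) ⊆ Z} is a left inverse: for every I ∈ S, I = {a ∈ T | Supp(a) ⊆ Supp(I)}. -/
open CategoryTheory CategoryTheory.Limits CategoryTheory.Pretriangulated

universe v u

variable {C : Type u} [Category.{v} C]

/-- `Spc(T,S)`: the set of `S`-primes, i.e. members `P` of `S` such that the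
intersection of all members of `S` strictly containing `P` strictly contains `P`. -/
def SpcSet (S : Set (Set C)) : Set (Set C) :=
  {P : Set C | P ∈ S ∧ P ⊂ ⋂₀ {Q : Set C | Q ∈ S ∧ P ⊂ Q}}

/-- Key lemma: given `I ∈ S` and an object `a ∉ I`, there is an `S`-prime `P`
containing `I` with `a ∉ P`, obtained by Zorn's lemma. -/
lemma exists_prime_avoiding {α : Type*} (S : Set (Set α))
    (hchain : ∀ 𝒞 ⊆ S, 𝒞.Nonempty → IsChain (· ⊆ ·) 𝒞 → ⋃₀ 𝒞 ∈ S)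
    {I : Set α} (hI : I ∈ S) {a : α} (ha : a ∉ I) :
    ∃ P ∈ SpcSet S, I ⊆ P ∧ a ∉ P := by
  set T : Set (Set α) := {J | J ∈ S ∧ I ⊆ J ∧ a ∉ J} with hT
  have hzorn : ∀ c ⊆ T, IsChain (· ⊆ ·) c → c.Nonempty →
      ∃ ub ∈ T, ∀ s ∈ c, s ⊆ ub := by
    rintro c hcT hc ⟨J, hJ⟩
    refine ⟨⋃₀ c, ⟨hchain c (fun x hx => (hcT hx).1) ⟨J, hJ⟩ hc, ?_, ?_⟩,
      fun s hs => Set.subset_sUnion_of_mem hs⟩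
    · exact (hcT hJ).2.1.trans (Set.subset_sUnion_of_mem hJ)
    · rintro ⟨Q, hQc, haQ⟩
      exact (hcT hQc).2.2 haQ
  obtain ⟨P, hIP, hPT, hPmax⟩ := zorn_subset_nonempty T hzorn I ⟨hI, subset_rfl, ha⟩
  obtain ⟨hPS, hIsubP, haP⟩ := hPT
  refine ⟨P, ⟨hPS, ?_, ?_⟩, hIsubP, haP⟩
  · intro x hx
    rw [Set.mem_sInter]
    rintro Q ⟨_, hPQ⟩
    exact hPQ.1 hx
  · intro hsub
    apply haP
    apply hsub
    rw [Set.mem_sInter]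
    rintro Q ⟨hQS, hPQ⟩
    by_contra haQ
    exact hPQ.2 (hPmax ⟨hQS, hIsubP.trans hPQ.1, haQ⟩ hPQ.1)

/-- The map `S → 2^{Spc(T,S)}`, `I ↦ Supp(I) = {P ∈ Spc(T,S) | I ⊄ P}`, is injective
on `S`; if `S` is moreover closed under arbitrary intersections, then
`Z ↦ {a | Supp(a) ⊆ Z}` is a left inverse: `I = {a | Supp(a) ⊆ Supp(I)}` for `I ∈ S`. -/
theorem stmt_9 (C : Type u) [Category.{v} C] [Preadditive C] [HasZeroObject C]
    [HasShift C ℤ] [∀ n : ℤ, (shiftFunctor C n).Additive] [Pretriangulated C]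
    (S : Set (Set C)) (hthick : ∀ I ∈ S, IsThickSubcat I)
    (hchain : ∀ 𝒞 ⊆ S, 𝒞.Nonempty → IsChain (· ⊆ ·) 𝒞 → ⋃₀ 𝒞 ∈ S) :
    Set.InjOn (fun I : Set C => {P : Set C | P ∈ SpcSet S ∧ ¬ I ⊆ P}) S ∧
    ((∀ 𝒞 ⊆ S, 𝒞.Nonempty → ⋂₀ 𝒞 ∈ S) →
      ∀ I ∈ S, I = {a : C |
        {P : Set C | P ∈ SpcSet S ∧ a ∉ P} ⊆ {P : Set C | P ∈ SpcSet S ∧ ¬ I ⊆ P}}) := by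
  have main : ∀ (I : Set C), ∀ J ∈ S,
      {P : Set C | P ∈ SpcSet S ∧ ¬ I ⊆ P} ⊆ {P : Set C | P ∈ SpcSet S ∧ ¬ J ⊆ P} →
      I ⊆ J := by
    intro I J hJ hsub a haI
    by_contra haJ
    obtain ⟨P, hPSpc, hJP, haP⟩ := exists_prime_avoiding S hchain hJ haJ
    have hmem : P ∈ {P : Set C | P ∈ SpcSet S ∧ ¬ I ⊆ P} :=
      ⟨hPSpc, fun h => haP (h haI)⟩
    exact (hsub hmem).2 hJP
  constructor
  · intro I hI J hJ h
    exact Set.Subset.antisymm (main I J hJ (le_of_eq h)) (main J I hI (ge_of_eq h))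
  · intro _ I hI
    ext a
    constructor
    · intro haI P hP
      exact ⟨hP.1, fun hIP => hP.2 (hIP haI)⟩
    · intro hsub
      by_contra haI
      obtain ⟨P, hPSpc, hIP, haP⟩ := exists_prime_avoiding S hchain hI haI
      exact (hsub ⟨hPSpc, haP⟩).2 hIP
end

section
/- Let T be a pretriangulated category and S a set of thick subcategories of T closed under unions of chains. Then every member I ∈ S is the intersection of all S-primes containing it: I = ⋂ {P ∈ Spc(T,S) | I ⊆ P}. -/
open CategoryTheory CategoryTheory.Limits CategoryTheory.Pretriangulated

universe v u

variable {C : Type u} [Category.{v} C]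

/-- Every member `I ∈ S` is the intersection of all `S`-primes containing it. -/
theorem stmt_10 (C : Type u) [Category.{v} C] [Preadditive C] [HasZeroObject C]
    [HasShift C ℤ] [∀ n : ℤ, (shiftFunctor C n).Additive] [Pretriangulated C]
    (S : Set (Set C)) (hthick : ∀ I ∈ S, IsThickSubcat I)
    (hchain : ∀ 𝒞 ⊆ S, 𝒞.Nonempty → IsChain (· ⊆ ·) 𝒞 → ⋃₀ 𝒞 ∈ S)
    (I : Set C) (hI : I ∈ S) :
    I = ⋂₀ {P : Set C | P ∈ SpcSet S ∧ I ⊆ P} := by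
  ext X
  simp only [Set.mem_sInter, Set.mem_setOf_eq]
  constructor
  · exact fun hX P hP => hP.2 hX
  · intro h
    by_contra hX
    have hzorn : ∀ c ⊆ {J | J ∈ S ∧ I ⊆ J ∧ X ∉ J}, IsChain (· ⊆ ·) c → c.Nonempty →
        ∃ ub ∈ {J | J ∈ S ∧ I ⊆ J ∧ X ∉ J}, ∀ s ∈ c, s ⊆ ub := by
      intro c hcS hc hne
      refine ⟨⋃₀ c, ⟨hchain c (fun J hJ => (hcS hJ).1) hne hc, ?_, ?_⟩,
        fun s hs => Set.subset_sUnion_of_mem hs⟩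
      · obtain ⟨J, hJ⟩ := hne
        exact (hcS hJ).2.1.trans (Set.subset_sUnion_of_mem hJ)
      · rintro ⟨J, hJ, hXJ⟩
        exact (hcS hJ).2.2 hXJ
    obtain ⟨P, hIP, hPmax⟩ :=
      zorn_subset_nonempty {J | J ∈ S ∧ I ⊆ J ∧ X ∉ J} hzorn I ⟨hI, subset_rfl, hX⟩
    obtain ⟨hPS, hIsubP, hXP⟩ := hPmax.prop
    have hQ : ∀ Q ∈ S, P ⊂ Q → X ∈ Q := by
      intro Q hQS hPQ
      by_contra hXQ
      exact hPQ.2 (hPmax.2 ⟨hQS, hIsubP.trans hPQ.1, hXQ⟩ hPQ.1)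
    have hprime : P ∈ SpcSet S := by
      have h1 : P ⊆ ⋂₀ {Q : Set C | Q ∈ S ∧ P ⊂ Q} :=
        fun y hy => Set.mem_sInter.2 fun Q hQ' => hQ'.2.1 hy
      have h2 : X ∈ ⋂₀ {Q : Set C | Q ∈ S ∧ P ⊂ Q} :=
        Set.mem_sInter.2 fun Q hQ' => hQ Q hQ'.1 hQ'.2
      exact ⟨hPS, h1.ssubset_of_ne fun he => hXP (he ▸ h2)⟩
    exact hXP (h P ⟨hprime, hIsubP⟩)
end

section
/- Let T be a pretriangulated category. The Matsui spectrum Spc_△(T) (the set of prime thick subcategories of T) is empty if and only if every object of T is a zero object. Equivalently, if T has a nonzero object, then there exists a prime thick subcategory of T. -/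
open CategoryTheory CategoryTheory.Limits CategoryTheory.Pretriangulated

universe v u

/-- A prime thick subcategory: a thick subcategory `P` such that the intersection of
all thick subcategories strictly containing `P` strictly contains `P`. -/
def IsPrimeThick {C : Type u} [Category.{v} C] [Preadditive C] [HasZeroObject C]
    [HasShift C ℤ] [∀ n : ℤ, (shiftFunctor C n).Additive] [Pretriangulated C]
    (P : Set C) : Prop :=
  IsThickSubcat P ∧ P ⊂ ⋂₀ {Q : Set C | IsThickSubcat Q ∧ P ⊂ Q}

section Aux

variable {C : Type u} [Category.{v} C] [Preadditive C] [HasZeroObject C]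
    [HasShift C ℤ] [∀ n : ℤ, (shiftFunctor C n).Additive] [Pretriangulated C]

/-- The class of zero objects is a thick subcategory. -/
lemma isThickSubcat_zeroSet : IsThickSubcat {X : C | IsZero X} where
  zero_mem _ h := h
  iso_mem e h := h.of_iso e.symm
  shift_mem X n h := (shiftFunctor C n).map_isZero h
  ext_mem T hT h₁ h₃ := Pretriangulated.Triangle.isZero₂_of_isZero₁₃ T hT h₁ h₃
  retract_mem X Y hX i r hir := by
    rw [Set.mem_setOf_eq, IsZero.iff_id_eq_zero, ← hir, hX.eq_of_tgt i 0, zero_comp]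

/-- The union of a nonempty chain of thick subcategories is thick. -/
lemma isThickSubcat_sUnion (c : Set (Set C)) (hc : IsChain (· ⊆ ·) c) (hne : c.Nonempty)
    (hthick : ∀ Q ∈ c, IsThickSubcat Q) : IsThickSubcat (⋃₀ c) where
  zero_mem X h := by
    obtain ⟨Q, hQ⟩ := hne
    exact ⟨Q, hQ, (hthick Q hQ).zero_mem X h⟩
  iso_mem e h := by
    obtain ⟨Q, hQ, hX⟩ := h
    exact ⟨Q, hQ, (hthick Q hQ).iso_mem e hX⟩
  shift_mem X n h := by
    obtain ⟨Q, hQ, hX⟩ := h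
    exact ⟨Q, hQ, (hthick Q hQ).shift_mem X n hX⟩
  ext_mem T hT h₁ h₃ := by
    obtain ⟨Q₁, hQ₁, hX₁⟩ := h₁
    obtain ⟨Q₃, hQ₃, hX₃⟩ := h₃
    rcases hc.total hQ₁ hQ₃ with h | h
    · exact ⟨Q₃, hQ₃, (hthick Q₃ hQ₃).ext_mem T hT (h hX₁) hX₃⟩
    · exact ⟨Q₁, hQ₁, (hthick Q₁ hQ₁).ext_mem T hT hX₁ (h hX₃)⟩
  retract_mem X Y h i r hir := by
    obtain ⟨Q, hQ, hX⟩ := h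
    exact ⟨Q, hQ, (hthick Q hQ).retract_mem X Y hX i r hir⟩

/-- If there is a nonzero object, there is a prime thick subcategory. -/
lemma exists_primeThick {X : C} (hX : ¬ IsZero X) : ∃ P : Set C, IsPrimeThick P := by
  obtain ⟨P, -, hPmax⟩ := zorn_subset_nonempty
      {Q : Set C | IsThickSubcat Q ∧ X ∉ Q}
      (fun c hcS hc hne => ⟨⋃₀ c,
        ⟨isThickSubcat_sUnion c hc hne (fun Q hQ => (hcS hQ).1),
          fun ⟨Q, hQ, hXQ⟩ => (hcS hQ).2 hXQ⟩,
        fun s hs => Set.subset_sUnion_of_mem hs⟩)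
      {Y : C | IsZero Y} ⟨isThickSubcat_zeroSet, hX⟩
  refine ⟨P, hPmax.prop.1, ?_, ?_⟩
  · exact fun Y hY Q hQ => hQ.2.subset hY
  · intro hsub
    refine hPmax.prop.2 (hsub ?_)
    intro Q hQ
    by_contra hXQ
    exact hQ.2.not_subset (hPmax.le_of_ge ⟨hQ.1, hXQ⟩ hQ.2.subset)

end Aux

/-- The Matsui spectrum `Spc_△(T)` (the set of prime thick subcategories) is empty if
and only if every object of `T` is a zero object; equivalently, if `T` has a nonzero
object then there exists a prime thick subcategory of `T`. -/
theorem stmt_11 (C : Type u) [Category.{v} C] [Preadditive C] [HasZeroObject C]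
    [HasShift C ℤ] [∀ n : ℤ, (shiftFunctor C n).Additive] [Pretriangulated C] :
    ({P : Set C | IsPrimeThick P} = ∅ ↔ ∀ X : C, IsZero X) ∧
    ((∃ X : C, ¬ IsZero X) → ∃ P : Set C, IsPrimeThick P) := by
  refine ⟨⟨?_, ?_⟩, fun ⟨X, hX⟩ => exists_primeThick hX⟩
  · intro h X
    by_contra hX
    obtain ⟨P, hP⟩ := exists_primeThick hX
    exact (Set.eq_empty_iff_forall_notMem.1 h P) hP
  · intro h
    rw [Set.eq_empty_iff_forall_notMem]
    intro P hP
    have hPuniv : P = Set.univ :=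
      Set.eq_univ_of_forall (fun X => hP.1.zero_mem X (h X))
    exact hP.2.ne (subset_antisymm hP.2.subset (by rw [hPuniv]; exact Set.subset_univ _))
end

section
/- Let T be a pretriangulated category. Then the Matsui spectrum Spc_△(T), equipped with the map a ↦ Supp(a) = {P ∈ Spc_△(T) | a ∉ P} and the topology whose closed sets are generated by {Supp(a) | a an object of T}, is a support datum of T, and it is universal: for every support datum (Y, Supp_Y) of T there exists a unique continuous map f: Spc_△(T) → Y with f^{-1}(Supp_Y(a)) = Supp(a) for every object a of T. -/
open CategoryTheory CategoryTheory.Limits CategoryTheory.Pretriangulated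

universe w v u
open ZeroObject

variable {C : Type u} [Category.{v} C] [Preadditive C] [HasZeroObject C]
  [HasShift C ℤ] [∀ n : ℤ, (shiftFunctor C n).Additive] [Pretriangulated C]

/-- The Matsui spectrum `Spc_△(T)` as a type: prime thick subcategories, i.e. thick
subcategories `P` such that the intersection of all thick subcategories strictly
containing `P` strictly contains `P`. -/
abbrev MatsuiSpc (C : Type u) [Category.{v} C] [Preadditive C] [HasZeroObject C]
    [HasShift C ℤ] [∀ n : ℤ, (shiftFunctor C n).Additive] [Pretriangulated C] :=
  {P : Set C // IsThickSubcat P ∧ P ⊂ ⋂₀ {Q : Set C | IsThickSubcat Q ∧ P ⊂ Q}}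

/-- `Supp(a) = {P ∈ Spc_△(T) | a ∉ P}`. -/
def matsuiSupp (a : C) : Set (MatsuiSpc C) := {P : MatsuiSpc C | a ∉ P.1}

/-- The topology on `Spc_△(T)` whose closed sets are generated by the `Supp(a)`. -/
instance MatsuiSpc.topologicalSpace : TopologicalSpace (MatsuiSpc C) :=
  .generateFrom {U : Set (MatsuiSpc C) | ∃ a : C, U = (matsuiSupp a)ᶜ}


/-! Auxiliary lemmas -/


lemma matsui_isThick_sInter (S : Set (Set C)) (h : ∀ Q ∈ S, IsThickSubcat Q) :
    IsThickSubcat (⋂₀ S) where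
  zero_mem X hX := fun Q hQ => (h Q hQ).zero_mem X hX
  iso_mem e hX := fun Q hQ => (h Q hQ).iso_mem e (hX Q hQ)
  shift_mem X n hX := fun Q hQ => (h Q hQ).shift_mem X n (hX Q hQ)
  ext_mem T hT hA hC := fun Q hQ => (h Q hQ).ext_mem T hT (hA Q hQ) (hC Q hQ)
  retract_mem X Z hX i r hir := fun Q hQ => (h Q hQ).retract_mem X Z (hX Q hQ) i r hir

lemma matsui_isThick_sUnion (S : Set (Set C)) (hc : IsChain (· ⊆ ·) S) (hne : S.Nonempty)
    (h : ∀ Q ∈ S, IsThickSubcat Q) : IsThickSubcat (⋃₀ S) where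
  zero_mem X hX := by obtain ⟨Q, hQ⟩ := hne; exact ⟨Q, hQ, (h Q hQ).zero_mem X hX⟩
  iso_mem e := fun ⟨Q, hQ, hX⟩ => ⟨Q, hQ, (h Q hQ).iso_mem e hX⟩
  shift_mem X n := fun ⟨Q, hQ, hX⟩ => ⟨Q, hQ, (h Q hQ).shift_mem X n hX⟩
  ext_mem T hT := fun ⟨Q, hQ, hA⟩ ⟨R, hR, hC⟩ => by
    rcases hc.total hQ hR with hQR | hRQ
    · exact ⟨R, hR, (h R hR).ext_mem T hT (hQR hA) hC⟩
    · exact ⟨Q, hQ, (h Q hQ).ext_mem T hT hA (hRQ hC)⟩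
  retract_mem X Z := fun ⟨Q, hQ, hX⟩ i r hir => ⟨Q, hQ, (h Q hQ).retract_mem X Z hX i r hir⟩

lemma matsui_exists_prime (I : Set C) (hI : IsThickSubcat I) (a : C) (ha : a ∉ I) :
    ∃ P : Set C, (IsThickSubcat P ∧ P ⊂ ⋂₀ {Q : Set C | IsThickSubcat Q ∧ P ⊂ Q}) ∧
      I ⊆ P ∧ a ∉ P := by
  obtain ⟨P, hIP, hPmax⟩ := zorn_subset_nonempty
    {Q : Set C | IsThickSubcat Q ∧ a ∉ Q}
    (fun c hcS hchain hcne => ⟨⋃₀ c,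
      ⟨matsui_isThick_sUnion c hchain hcne (fun Q hQ => (hcS hQ).1),
       fun ⟨Q, hQ, haQ⟩ => (hcS hQ).2 haQ⟩,
      fun s hs => Set.subset_sUnion_of_mem hs⟩) I ⟨hI, ha⟩
  obtain ⟨hPthick, haP⟩ := hPmax.1
  have hsub : P ⊆ ⋂₀ {Q : Set C | IsThickSubcat Q ∧ P ⊂ Q} :=
    fun x hx Q hQ => hQ.2.subset hx
  have hain : a ∈ ⋂₀ {Q : Set C | IsThickSubcat Q ∧ P ⊂ Q} := by
    intro Q hQ
    by_contra haQ
    exact hQ.2.not_subset (hPmax.2 ⟨hQ.1, haQ⟩ hQ.2.subset)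
  refine ⟨P, ⟨hPthick, ⟨hsub, fun hcon => haP (hcon hain)⟩⟩, hIP, haP⟩

lemma IsThickSubcat.shift_one_iff {P : Set C} (hP : IsThickSubcat P) (a : C) :
    a⟦(1 : ℤ)⟧ ∈ P ↔ a ∈ P :=
  ⟨fun h => hP.iso_mem ((shiftFunctorCompIsoId C (1 : ℤ) (-1) (by ring)).app a)
      (hP.shift_mem _ (-1) h),
   fun h => hP.shift_mem a 1 h⟩

lemma IsThickSubcat.biprod_iff [HasBinaryBiproducts C] {P : Set C} (hP : IsThickSubcat P)
    (a b : C) : (a ⊞ b) ∈ P ↔ a ∈ P ∧ b ∈ P :=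
  ⟨fun h => ⟨hP.retract_mem _ _ h biprod.inl biprod.fst biprod.inl_fst,
    hP.retract_mem _ _ h biprod.inr biprod.snd biprod.inr_snd⟩,
   fun ⟨hA, hB⟩ => hP.ext_mem _ (binaryBiproductTriangle_distinguished a b) hA hB⟩

section SuppDatum

variable {Y : Type w} {sY : C → Set Y}

lemma supp_zero_subset (h1 : ∀ a : C, sY a = sY (a⟦(1 : ℤ)⟧))
    (h3 : ∀ T ∈ distTriang C, sY T.obj₂ ⊆ sY T.obj₁ ∪ sY T.obj₃) (X : C) :
    sY (0 : C) ⊆ sY X := by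
  have h2 : sY (0 : C) ⊆ sY X ∪ sY (X⟦(1 : ℤ)⟧) :=
    h3 _ (rot_of_distTriang _ (contractible_distinguished X))
  rw [← h1 X, Set.union_self] at h2
  exact h2

lemma supp_iso_le (h1 : ∀ a : C, sY a = sY (a⟦(1 : ℤ)⟧))
    (h3 : ∀ T ∈ distTriang C, sY T.obj₂ ⊆ sY T.obj₁ ∪ sY T.obj₃)
    {a b : C} (e : a ≅ b) : sY b ⊆ sY a := by
  have hd : Triangle.mk e.hom (0 : b ⟶ (0 : C)) (0 : (0 : C) ⟶ a⟦(1 : ℤ)⟧) ∈ distTriang C :=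
    isomorphic_distinguished _ (contractible_distinguished a) _
      (Triangle.isoMk _ _ (Iso.refl a) e.symm (Iso.refl 0) (by exact e.hom_inv_id.trans (Category.id_comp _).symm) (by dsimp; exact Limits.IsZero.eq_of_tgt (isZero_zero C) _ _) (by dsimp; exact Limits.IsZero.eq_of_src (isZero_zero C) _ _))
  intro y hy
  rcases h3 _ hd hy with h | h
  · exact h
  · exact supp_zero_subset h1 h3 a h

lemma supp_iso (h1 : ∀ a : C, sY a = sY (a⟦(1 : ℤ)⟧))
    (h3 : ∀ T ∈ distTriang C, sY T.obj₂ ⊆ sY T.obj₁ ∪ sY T.obj₃)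
    {a b : C} (e : a ≅ b) : sY a = sY b :=
  (supp_iso_le h1 h3 e.symm).antisymm (supp_iso_le h1 h3 e)

lemma supp_shift (h1 : ∀ a : C, sY a = sY (a⟦(1 : ℤ)⟧))
    (h3 : ∀ T ∈ distTriang C, sY T.obj₂ ⊆ sY T.obj₁ ∪ sY T.obj₃)
    (a : C) (n : ℤ) : sY (a⟦n⟧) = sY a := by
  induction n using Int.induction_on with
  | zero => exact supp_iso h1 h3 ((shiftFunctorZero C ℤ).app a)
  | succ n ih =>
      calc sY (a⟦(n + 1 : ℤ)⟧) = sY ((a⟦(n : ℤ)⟧)⟦(1 : ℤ)⟧) :=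
            supp_iso h1 h3 ((shiftFunctorAdd C (n : ℤ) 1).app a)
        _ = sY (a⟦(n : ℤ)⟧) := (h1 _).symm
        _ = sY a := ih
  | pred n ih =>
      calc sY (a⟦(-(n : ℤ) - 1)⟧) = sY ((a⟦(-(n : ℤ) - 1)⟧)⟦(1 : ℤ)⟧) := h1 _
        _ = sY (a⟦(-(n : ℤ))⟧) :=
            (supp_iso h1 h3 ((shiftFunctorAdd' C (-(n : ℤ) - 1) 1 (-(n : ℤ)) (by ring)).app a)).symm
        _ = sY a := ih

lemma supp_retract_subset [HasBinaryBiproducts C]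
    (h1 : ∀ a : C, sY a = sY (a⟦(1 : ℤ)⟧))
    (h2 : ∀ a b : C, sY (a ⊞ b) = sY a ∪ sY b)
    (h3 : ∀ T ∈ distTriang C, sY T.obj₂ ⊆ sY T.obj₁ ∪ sY T.obj₃)
    {X Z : C} (i : Z ⟶ X) (r : X ⟶ Z) (hir : i ≫ r = 𝟙 Z) : sY Z ⊆ sY X := by
  obtain ⟨W, g, h, hT⟩ := distinguished_cocone_triangle i
  have h31 : h ≫ i⟦(1 : ℤ)⟧' = 0 := comp_distTriang_mor_zero₃₁ _ hT
  have hm3 : h = 0 := by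
    calc h = h ≫ (i ≫ r)⟦(1 : ℤ)⟧' := by rw [hir]; simp
      _ = (h ≫ i⟦(1 : ℤ)⟧') ≫ r⟦(1 : ℤ)⟧' := by rw [Functor.map_comp, Category.assoc]
      _ = 0 := by rw [h31, zero_comp]
  obtain ⟨s, hs⟩ := Triangle.coyoneda_exact₃ _ hT (𝟙 W)
    (by show 𝟙 W ≫ h = 0; rw [hm3, comp_zero])
  have hs' : (𝟙 W : W ⟶ W) = s ≫ g := hs
  have h12 : i ≫ g = 0 := comp_distTriang_mor_zero₁₂ _ hT
  let φ : binaryBiproductTriangle Z W ⟶ Triangle.mk i g h :=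
    { hom₁ := 𝟙 Z
      hom₂ := biprod.desc i s
      hom₃ := 𝟙 W
      comm₁ := by exact (biprod.inl_desc i s).trans (Category.id_comp i).symm
      comm₂ := by
        apply biprod.hom_ext'
        · exact ((biprod.inl_snd_assoc _).trans zero_comp).trans ((biprod.inl_desc_assoc i s g).trans h12).symm
        · exact (biprod.inr_snd_assoc _).trans (hs'.trans (biprod.inr_desc_assoc i s g).symm)
      comm₃ := by show (0 : W ⟶ Z⟦(1 : ℤ)⟧) ≫ (𝟙 Z)⟦(1 : ℤ)⟧' = 𝟙 W ≫ h; simp [hm3] }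
  have : IsIso φ.hom₂ := isIso₂_of_isIso₁₃ φ (binaryBiproductTriangle_distinguished Z W) hT
    (by dsimp [φ]; exact IsIso.id _) (by dsimp [φ]; exact IsIso.id _)
  have he : sY (Z ⊞ W) = sY X := supp_iso h1 h3 (@asIso _ _ _ _ φ.hom₂ this)
  rw [← he, h2]
  exact Set.subset_union_left

lemma supp_point_thick [HasBinaryBiproducts C]
    (h1 : ∀ a : C, sY a = sY (a⟦(1 : ℤ)⟧))
    (h2 : ∀ a b : C, sY (a ⊞ b) = sY a ∪ sY b)
    (h3 : ∀ T ∈ distTriang C, sY T.obj₂ ⊆ sY T.obj₁ ∪ sY T.obj₃)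
    (y : Y) (hy : y ∉ sY (0 : C)) : IsThickSubcat {c : C | y ∉ sY c} where
  zero_mem X hX := by
    show y ∉ sY X
    rw [supp_iso h1 h3 hX.isoZero]
    exact hy
  iso_mem {X X'} e hX := by
    show y ∉ sY X'
    rw [← supp_iso h1 h3 e]
    exact hX
  shift_mem X n hX := by
    show y ∉ sY (X⟦n⟧)
    rw [supp_shift h1 h3 X n]
    exact hX
  ext_mem T hT hA hC := fun hy2 => (h3 T hT hy2).elim hA hC
  retract_mem X Z hX i r hir := fun hyZ => hX (supp_retract_subset h1 h2 h3 i r hir hyZ)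

lemma matsui_exists_point [HasBinaryBiproducts C]
    (h1 : ∀ a : C, sY a = sY (a⟦(1 : ℤ)⟧))
    (h2 : ∀ a b : C, sY (a ⊞ b) = sY a ∪ sY b)
    (h3 : ∀ T ∈ distTriang C, sY T.obj₂ ⊆ sY T.obj₁ ∪ sY T.obj₃)
    (h4 : ∀ I J : Set C, IsThickSubcat I → IsThickSubcat J → I ≠ J →
      (⋃ a ∈ I, sY a) ≠ ⋃ b ∈ J, sY b)
    (P : MatsuiSpc C) : ∃ y : Y, ∀ a : C, y ∈ sY a ↔ a ∉ P.1 := by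
  obtain ⟨hPthick, hPprime⟩ := P.2
  set J := ⋂₀ {Q : Set C | IsThickSubcat Q ∧ P.1 ⊂ Q} with hJdef
  have hJthick : IsThickSubcat J := matsui_isThick_sInter _ (fun Q hQ => hQ.1)
  have hne := h4 P.1 J hPthick hJthick hPprime.ne
  have hsub : (⋃ a ∈ P.1, sY a) ⊆ ⋃ a ∈ J, sY a :=
    Set.biUnion_subset_biUnion_left hPprime.subset
  obtain ⟨y, hyJ, hyP⟩ := Set.exists_of_ssubset (hsub.ssubset_of_ne hne)
  obtain ⟨b, hbJ, hyb⟩ := Set.mem_iUnion₂.1 hyJ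
  have hyP' : ∀ a ∈ P.1, y ∉ sY a := fun a ha hya => hyP (Set.mem_biUnion ha hya)
  have hy0 : y ∉ sY (0 : C) := hyP' _ (hPthick.zero_mem _ (isZero_zero C))
  have hPy : IsThickSubcat {c : C | y ∉ sY c} := supp_point_thick h1 h2 h3 y hy0
  have hPsub : P.1 ⊆ {c : C | y ∉ sY c} := fun a ha => hyP' a ha
  have heq : P.1 = {c : C | y ∉ sY c} := by
    by_contra hne'
    have hJsub : J ⊆ {c : C | y ∉ sY c} :=
      Set.sInter_subset_of_mem ⟨hPy, Set.ssubset_iff_subset_ne.2 ⟨hPsub, hne'⟩⟩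
    exact hJsub hbJ hyb
  refine ⟨y, fun a => ⟨?_, ?_⟩⟩
  · intro hya ha
    rw [heq] at ha
    exact ha hya
  · intro ha
    by_contra hya
    exact ha (by rw [heq]; exact hya)

end SuppDatum

lemma matsui_unions_ne_aux (I J : Set C) (hJ : IsThickSubcat J) {a : C}
    (haI : a ∈ I) (haJ : a ∉ J)
    (h : (⋃ b ∈ I, matsuiSupp b) = ⋃ b ∈ J, matsuiSupp b) : False := by
  obtain ⟨P, hP, hJP, haP⟩ := matsui_exists_prime J hJ a haJ
  have hmem : (⟨P, hP⟩ : MatsuiSpc C) ∈ ⋃ b ∈ I, matsuiSupp b :=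
    Set.mem_biUnion haI haP
  rw [h] at hmem
  obtain ⟨b, hbJ, hbP⟩ := Set.mem_iUnion₂.1 hmem
  exact hbP (hJP hbJ)

lemma matsui_mem_iff_of_generateOpen {α : Type*} {gen : Set (Set α)} {x y : α}
    (h : ∀ U ∈ gen, (x ∈ U ↔ y ∈ U)) :
    ∀ {U : Set α}, TopologicalSpace.GenerateOpen gen U → (x ∈ U ↔ y ∈ U) := by
  intro U hU
  induction hU with
  | basic V hV => exact h V hV
  | univ => simp
  | inter V W _ _ ihV ihW => exact and_congr ihV ihW
  | sUnion S _ ih =>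
      exact ⟨fun ⟨s, hs, hxs⟩ => ⟨s, hs, (ih s hs).1 hxs⟩,
        fun ⟨s, hs, hys⟩ => ⟨s, hs, (ih s hs).2 hys⟩⟩


/-- The Matsui spectrum `Spc_△(T)`, with `a ↦ Supp(a)` and the topology generated by
the `Supp(a)` as closed sets, is a support datum of `T`, and it is universal: for every
support datum `(Y, Supp_Y)` of `T` there is a unique continuous `f : Spc_△(T) → Y`
with `f ⁻¹(Supp_Y a) = Supp a` for every object `a`. -/
theorem stmt_13 (C : Type u) [Category.{v} C] [Preadditive C] [HasZeroObject C]
    [HasShift C ℤ] [∀ n : ℤ, (shiftFunctor C n).Additive] [Pretriangulated C]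
    [HasBinaryBiproducts C] :
    (T0Space (MatsuiSpc C) ∧
      (∀ a : C, matsuiSupp a = matsuiSupp (a⟦(1 : ℤ)⟧)) ∧
      (∀ a b : C, matsuiSupp (a ⊞ b) = matsuiSupp a ∪ matsuiSupp b) ∧
      (∀ T ∈ distTriang C,
        matsuiSupp T.obj₂ ⊆ matsuiSupp T.obj₁ ∪ matsuiSupp T.obj₃) ∧
      (∀ I J : Set C, IsThickSubcat I → IsThickSubcat J → I ≠ J →
        (⋃ a ∈ I, matsuiSupp a) ≠ ⋃ b ∈ J, matsuiSupp b) ∧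
      MatsuiSpc.topologicalSpace =
        TopologicalSpace.generateFrom
          {U : Set (MatsuiSpc C) | ∃ a : C, U = (matsuiSupp a)ᶜ}) ∧
    ∀ (Y : Type w) (tY : TopologicalSpace Y), @T0Space Y tY →
      ∀ sY : C → Set Y,
        (∀ a : C, sY a = sY (a⟦(1 : ℤ)⟧)) →
        (∀ a b : C, sY (a ⊞ b) = sY a ∪ sY b) →
        (∀ T ∈ distTriang C, sY T.obj₂ ⊆ sY T.obj₁ ∪ sY T.obj₃) →
        (∀ I J : Set C, IsThickSubcat I → IsThickSubcat J → I ≠ J →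
          (⋃ a ∈ I, sY a) ≠ ⋃ b ∈ J, sY b) →
        tY = TopologicalSpace.generateFrom {U : Set Y | ∃ a : C, U = (sY a)ᶜ} →
        ∃! f : MatsuiSpc C → Y,
          @Continuous (MatsuiSpc C) Y MatsuiSpc.topologicalSpace tY f ∧
          ∀ a : C, f ⁻¹' sY a = matsuiSupp a := by
  constructor
  · refine ⟨?_, ?_, ?_, ?_, ?_, rfl⟩
    · -- T0
      refine ⟨fun x y h => ?_⟩
      have hall := inseparable_iff_forall_isOpen.1 h
      refine Subtype.ext (Set.ext fun a => ?_)
      have hopen : IsOpen ((matsuiSupp (C := C) a)ᶜ) :=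
        TopologicalSpace.GenerateOpen.basic _ ⟨a, rfl⟩
      have := hall _ hopen
      simpa [matsuiSupp, not_not] using this
    · intro a
      ext P
      simp only [matsuiSupp, Set.mem_setOf_eq]
      exact not_congr (P.2.1.shift_one_iff a).symm
    · intro a b
      ext P
      simp only [matsuiSupp, Set.mem_setOf_eq, Set.mem_union]
      rw [P.2.1.biprod_iff]
      tauto
    · intro T hT P hP
      by_contra hc
      simp only [Set.mem_union, matsuiSupp, Set.mem_setOf_eq, not_or, not_not] at hc
      exact hP (P.2.1.ext_mem T hT hc.1 hc.2)
    · intro I J hI hJ hne heq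
      have hns : ¬ I ⊆ J ∨ ¬ J ⊆ I := by
        by_contra hcc
        push_neg at hcc
        exact hne (hcc.1.antisymm hcc.2)
      rcases hns with hn | hn
      · obtain ⟨a, haI, haJ⟩ := Set.not_subset.1 hn
        exact matsui_unions_ne_aux I J hJ haI haJ heq
      · obtain ⟨a, haJ, haI⟩ := Set.not_subset.1 hn
        exact matsui_unions_ne_aux J I hI haJ haI heq.symm
  · intro Y tY htY sY h1 h2 h3 h4 htopo
    subst htopo
    have hex : ∀ P : MatsuiSpc C, ∃ y : Y, ∀ a : C, y ∈ sY a ↔ a ∉ P.1 :=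
      matsui_exists_point h1 h2 h3 h4
    refine ⟨fun P => (hex P).choose, ⟨?_, ?_⟩, ?_⟩
    · rw [continuous_generateFrom_iff]
      rintro U ⟨a, rfl⟩
      have hpre : (fun P : MatsuiSpc C => (hex P).choose) ⁻¹' (sY a)ᶜ = (matsuiSupp a)ᶜ := by
        ext P
        simp only [Set.mem_preimage, Set.mem_compl_iff, matsuiSupp, Set.mem_setOf_eq,
          (hex P).choose_spec a, not_not]
      rw [hpre]
      exact TopologicalSpace.GenerateOpen.basic _ ⟨a, rfl⟩
    · intro a
      ext P
      exact (hex P).choose_spec a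
    · rintro g ⟨hgc, hg⟩
      funext P
      have hA : ∀ a : C, g P ∈ sY a ↔ a ∉ P.1 := by
        intro a
        constructor
        · intro hmem
          have : P ∈ g ⁻¹' sY a := hmem
          rw [hg a] at this
          exact this
        · intro hmem
          have : P ∈ matsuiSupp a := hmem
          rw [← hg a] at this
          exact this
      have hB := (hex P).choose_spec
      have hgen : ∀ U ∈ {U : Set Y | ∃ a : C, U = (sY a)ᶜ},
          (g P ∈ U ↔ (hex P).choose ∈ U) := by
        rintro U ⟨a, rfl⟩
        simp only [Set.mem_compl_iff, hA a, hB a]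
      letI : TopologicalSpace Y := TopologicalSpace.generateFrom {U : Set Y | ∃ a : C, U = (sY a)ᶜ}
      haveI : T0Space Y := htY
      have hins : Inseparable (g P) ((hex P).choose) :=
        inseparable_iff_forall_isOpen.2 fun U hU =>
          matsui_mem_iff_of_generateOpen hgen (by exact hU)
      exact hins.eq
end

section
/- Let T be a pretriangulated category and let L_T be the join-semilattice of classically finitely generated thick subcategories of T. Fix a T0 topological space Y. Then the assignment sending a support datum structure Supp on Y for T to the map I ↦ ∪_{a∈I} Supp(a) on L_T, and the assignment sending a support datum structure Supp' on Y for L_T to the map a ↦ Supp'(⟨a⟩) (where ⟨a⟩ is the thick subcategory generated by a), are mutually inverse bijections between support datum structures of T on Y and support datum structures of L_T on Y. -/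
open CategoryTheory CategoryTheory.Limits CategoryTheory.Pretriangulated

universe w v u

variable {C : Type u} [Category.{v} C] [Preadditive C] [HasZeroObject C]
  [HasShift C ℤ] [∀ n : ℤ, (shiftFunctor C n).Additive] [Pretriangulated C]

/-- The smallest thick subcategory containing a class of objects `W`. -/
def thickClosure (W : Set C) : Set C := ⋂₀ {P : Set C | IsThickSubcat P ∧ W ⊆ P}

lemma thickClosure_isThick (W : Set C) : IsThickSubcat (thickClosure W) where
  zero_mem X hX := Set.mem_sInter.2 fun _ hP => hP.1.zero_mem X hX
  iso_mem e hX := Set.mem_sInter.2 fun P hP => hP.1.iso_mem e (Set.mem_sInter.1 hX P hP)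
  shift_mem X n hX :=
    Set.mem_sInter.2 fun P hP => hP.1.shift_mem X n (Set.mem_sInter.1 hX P hP)
  ext_mem T hT h1 h3 := Set.mem_sInter.2 fun P hP =>
    hP.1.ext_mem T hT (Set.mem_sInter.1 h1 P hP) (Set.mem_sInter.1 h3 P hP)
  retract_mem X Y hX i r hir := Set.mem_sInter.2 fun P hP =>
    hP.1.retract_mem X Y (Set.mem_sInter.1 hX P hP) i r hir

/-- A classically finitely generated thick subcategory: one which is the smallest thick
subcategory containing some single object. -/
def IsFGThick (I : Set C) : Prop := IsThickSubcat I ∧ ∃ a : C, I = thickClosure {a}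

/-- The join-semilattice `L_T` of classically finitely generated thick subcategories. -/
abbrev FGThick (C : Type u) [Category.{v} C] [Preadditive C] [HasZeroObject C]
    [HasShift C ℤ] [∀ n : ℤ, (shiftFunctor C n).Additive] [Pretriangulated C] :=
  {I : Set C // IsFGThick I}

/-- An ind-object of `L_T`: a nonempty downward closed subset closed under joins
(the join of `I` and `J` being the thick subcategory generated by `I ∪ J`). -/
def IndObjFG (𝒮 : Set (FGThick C)) : Prop :=
  𝒮.Nonempty ∧ (∀ I J : FGThick C, I.1 ⊆ J.1 → J ∈ 𝒮 → I ∈ 𝒮) ∧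
  (∀ I J K : FGThick C, I ∈ 𝒮 → J ∈ 𝒮 → K.1 = thickClosure (I.1 ∪ J.1) → K ∈ 𝒮)

variable (C) in
/-- A support datum structure of `T` on a fixed T0 space `Y`. -/
def IsSuppDatumT {Y : Type w} [HasBinaryBiproducts C] (tY : TopologicalSpace Y)
    (s : C → Set Y) : Prop :=
  (∀ a : C, s a = s (a⟦(1 : ℤ)⟧)) ∧
  (∀ a b : C, s (a ⊞ b) = s a ∪ s b) ∧
  (∀ T ∈ distTriang C, s T.obj₂ ⊆ s T.obj₁ ∪ s T.obj₃) ∧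
  (∀ I J : Set C, IsThickSubcat I → IsThickSubcat J → I ≠ J →
    (⋃ a ∈ I, s a) ≠ ⋃ a ∈ J, s a) ∧
  tY = TopologicalSpace.generateFrom {U : Set Y | ∃ a : C, U = (s a)ᶜ}

variable (C) in
/-- A support datum structure of the join-semilattice `L_T` on a fixed T0 space `Y`. -/
def IsSuppDatumL {Y : Type w} (tY : TopologicalSpace Y)
    (s' : FGThick C → Set Y) : Prop :=
  (∀ I J K : FGThick C, K.1 = thickClosure (I.1 ∪ J.1) → s' K = s' I ∪ s' J) ∧
  (∀ 𝒮 𝒯 : Set (FGThick C), IndObjFG 𝒮 → IndObjFG 𝒯 →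
    (⋃ I ∈ 𝒮, s' I) = (⋃ I ∈ 𝒯, s' I) → 𝒮 = 𝒯) ∧
  tY = TopologicalSpace.generateFrom {U : Set Y | ∃ I : FGThick C, U = (s' I)ᶜ}

/-- The map from support datum structures of `T` to support datum structures of `L_T`:
`Supp ↦ (I ↦ ⋃_{a ∈ I} Supp a)`. -/
def toSuppL {Y : Type w} (s : C → Set Y) : FGThick C → Set Y :=
  fun I => ⋃ a ∈ I.1, s a

/-- The map in the other direction: `Supp' ↦ (a ↦ Supp' ⟨a⟩)`. -/
def toSuppT {Y : Type w} (s' : FGThick C → Set Y) : C → Set Y :=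
  fun a => s' ⟨thickClosure {a}, thickClosure_isThick _, a, rfl⟩
open ZeroObject
section Aux

lemma subset_thickClosure (W : Set C) : W ⊆ thickClosure W :=
  fun _ ha => Set.mem_sInter.2 fun _ hP => hP.2 ha

lemma thickClosure_min {W P : Set C} (hP : IsThickSubcat P) (h : W ⊆ P) :
    thickClosure W ⊆ P := fun _ ha => Set.mem_sInter.1 ha P ⟨hP, h⟩

lemma mem_thickClosure_self (a : C) : a ∈ thickClosure {a} :=
  subset_thickClosure _ rfl

/-- The finitely generated thick subcategory generated by a single object. -/
def fgOf (a : C) : FGThick C := ⟨thickClosure {a}, thickClosure_isThick _, a, rfl⟩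

section SuppT

variable {Y : Type w} {s : C → Set Y}
  (h1 : ∀ a : C, s a = s (a⟦(1 : ℤ)⟧))
  (h2 : ∀ a b : C, s (a ⊞ b) = s a ∪ s b)
  (h3 : ∀ T ∈ distTriang C, s T.obj₂ ⊆ s T.obj₁ ∪ s T.obj₃)

include h1 h3 in
lemma supp_zero_subset_s15 {X : C} (hX : IsZero X) (a : C) : s X ⊆ s a := by
  have hd : Triangle.mk (𝟙 a) (0 : a ⟶ X) (0 : X ⟶ a⟦(1 : ℤ)⟧) ∈ distTriang C := by
    refine Pretriangulated.isomorphic_distinguished _ (contractible_distinguished a) _ ?_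
    exact Triangle.isoMk _ _ (Iso.refl _) (Iso.refl _) hX.isoZero
      (by cat_disch) (by exact zero_comp.trans comp_zero.symm)
      (by exact zero_comp.trans comp_zero.symm)
  have h := h3 _ (rot_of_distTriang _ hd)
  dsimp [Triangle.rotate] at h
  change s X ⊆ s a ∪ s (a⟦(1 : ℤ)⟧) at h
  rw [← h1 a, Set.union_self] at h
  exact h

include h1 h3 in
lemma supp_iso_s15 {a b : C} (e : a ≅ b) : s a = s b := by
  have key : ∀ x y : C, (x ≅ y) → s y ⊆ s x := by
    intro x y e'
    have hd : Triangle.mk e'.hom (0 : y ⟶ (0 : C)) (0 : (0 : C) ⟶ x⟦(1 : ℤ)⟧) ∈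
        distTriang C := by
      refine Pretriangulated.isomorphic_distinguished _ (contractible_distinguished x) _ ?_
      exact Triangle.isoMk _ _ (Iso.refl _) e'.symm (Iso.refl _)
        (by exact e'.hom_inv_id.trans (Category.comp_id _).symm)
        (by exact zero_comp.trans comp_zero.symm) (by exact zero_comp.trans comp_zero.symm)
    have h := h3 _ hd
    change s y ⊆ s x ∪ s (0 : C) at h
    intro z hz
    rcases h hz with h' | h'
    · exact h'
    · exact supp_zero_subset_s15 h1 h3 (isZero_zero C) x h'
  exact le_antisymm (key b a e.symm) (key a b e)

include h1 h3 in
lemma supp_shift_s15 (a : C) (n : ℤ) : s (a⟦n⟧) = s a := by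
  induction n using Int.induction_on with
  | zero => exact supp_iso_s15 h1 h3 ((shiftFunctorZero C ℤ).app a)
  | succ n ih =>
    have e : a⟦(n : ℤ) + 1⟧ ≅ (a⟦(n : ℤ)⟧)⟦(1 : ℤ)⟧ :=
      (shiftFunctorAdd' C (n : ℤ) 1 ((n : ℤ) + 1) rfl).app a
    rw [supp_iso_s15 h1 h3 e, ← h1, ih]
  | pred n ih =>
    have e : a⟦-(n : ℤ)⟧ ≅ (a⟦-(n : ℤ) - 1⟧)⟦(1 : ℤ)⟧ :=
      (shiftFunctorAdd' C (-(n : ℤ) - 1) 1 (-(n : ℤ)) (by ring)).app a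
    rw [h1 (a⟦-(n : ℤ) - 1⟧), ← supp_iso_s15 h1 h3 e, ih]

include h1 h2 h3 in
lemma supp_retract {X Z : C} (i : Z ⟶ X) (r : X ⟶ Z) (hir : i ≫ r = 𝟙 Z) :
    s Z ⊆ s X := by
  obtain ⟨W, p, w, hd⟩ := Pretriangulated.distinguished_cocone_triangle i
  have hw : w = 0 := by
    have hsm : SplitMono ((shiftFunctor C (1 : ℤ)).map i) :=
      ⟨(shiftFunctor C (1 : ℤ)).map r, by
        rw [← Functor.map_comp, hir]
        exact (shiftFunctor C (1 : ℤ)).map_id Z⟩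
    have : Mono ((shiftFunctor C (1 : ℤ)).map i) := hsm.mono
    have h0 := comp_distTriang_mor_zero₃₁ _ hd
    change w ≫ (shiftFunctor C (1 : ℤ)).map i = 0 at h0
    rw [← cancel_mono ((shiftFunctor C (1 : ℤ)).map i), zero_comp]
    exact h0
  obtain ⟨e, -, -⟩ := exists_iso_binaryBiproduct_of_distTriang _ hd hw
  change X ≅ Z ⊞ W at e
  rw [supp_iso_s15 h1 h3 e, h2]
  exact Set.subset_union_left

include h1 h2 h3 in
lemma thick_supp_le (U : Set Y) (hU : ∃ b : C, s b ⊆ U) :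
    IsThickSubcat {a : C | s a ⊆ U} where
  zero_mem X hX := by
    obtain ⟨b, hb⟩ := hU
    exact (supp_zero_subset_s15 h1 h3 hX b).trans hb
  iso_mem {X X'} e hX := by
    simp only [Set.mem_setOf_eq, ← supp_iso_s15 h1 h3 e]
    exact hX
  shift_mem X n hX := by
    simp only [Set.mem_setOf_eq, supp_shift_s15 h1 h3]
    exact hX
  ext_mem T hT hA hC := (h3 T hT).trans (Set.union_subset hA hC)
  retract_mem X Z hX i r hir := (supp_retract h1 h2 h3 i r hir).trans hX

include h1 h2 h3 in
lemma suppUnion_fg (x : C) : (⋃ a ∈ thickClosure {x}, s a) = s x := by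
  apply subset_antisymm
  · refine Set.iUnion₂_subset fun a ha => ?_
    refine thickClosure_min (thick_supp_le h1 h2 h3 (s x) ⟨x, subset_rfl⟩) ?_ ha
    exact Set.singleton_subset_iff.2 (show s x ⊆ s x from subset_rfl)
  · exact Set.subset_iUnion₂ (s := fun a _ => s a) x (mem_thickClosure_self x)

end SuppT

lemma join_eq (x y : C) :
    thickClosure (thickClosure {x} ∪ thickClosure {y}) = thickClosure {x ⊞ y} := by
  apply subset_antisymm
  · refine thickClosure_min (thickClosure_isThick _) (Set.union_subset ?_ ?_)
    · refine thickClosure_min (thickClosure_isThick _) (Set.singleton_subset_iff.2 ?_)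
      exact (thickClosure_isThick _).retract_mem (x ⊞ y) x (mem_thickClosure_self _)
        biprod.inl biprod.fst biprod.inl_fst
    · refine thickClosure_min (thickClosure_isThick _) (Set.singleton_subset_iff.2 ?_)
      exact (thickClosure_isThick _).retract_mem (x ⊞ y) y (mem_thickClosure_self _)
        biprod.inr biprod.snd biprod.inr_snd
  · refine thickClosure_min (thickClosure_isThick _) (Set.singleton_subset_iff.2 ?_)
    exact (thickClosure_isThick _).ext_mem _ (binaryBiproductTriangle_distinguished x y)
      (subset_thickClosure _ (Or.inl (mem_thickClosure_self x)))
      (subset_thickClosure _ (Or.inr (mem_thickClosure_self y)))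

lemma exists_fgJoin (I J : FGThick C) :
    ∃ K : FGThick C, K.1 = thickClosure (I.1 ∪ J.1) := by
  obtain ⟨x, hx⟩ := I.2.2
  obtain ⟨y, hy⟩ := J.2.2
  exact ⟨⟨thickClosure (I.1 ∪ J.1), thickClosure_isThick _, x ⊞ y,
    by rw [hx, hy, join_eq]⟩, rfl⟩

lemma indUnion_thick {𝒮 : Set (FGThick C)} (h𝒮 : IndObjFG 𝒮) :
    IsThickSubcat (⋃ I ∈ 𝒮, I.1) where
  zero_mem X hX := by
    obtain ⟨I, hI⟩ := h𝒮.1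
    exact Set.mem_iUnion₂.2 ⟨I, hI, I.2.1.zero_mem X hX⟩
  iso_mem {X X'} e hX := by
    obtain ⟨I, hI, hx⟩ := Set.mem_iUnion₂.1 hX
    exact Set.mem_iUnion₂.2 ⟨I, hI, I.2.1.iso_mem e hx⟩
  shift_mem X n hX := by
    obtain ⟨I, hI, hx⟩ := Set.mem_iUnion₂.1 hX
    exact Set.mem_iUnion₂.2 ⟨I, hI, I.2.1.shift_mem X n hx⟩
  ext_mem T hT hA hC := by
    obtain ⟨I, hI, ha⟩ := Set.mem_iUnion₂.1 hA
    obtain ⟨J, hJ, hc⟩ := Set.mem_iUnion₂.1 hC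
    obtain ⟨K, hK⟩ := exists_fgJoin I J
    refine Set.mem_iUnion₂.2 ⟨K, h𝒮.2.2 I J K hI hJ hK, ?_⟩
    rw [hK]
    exact (thickClosure_isThick _).ext_mem T hT
      (subset_thickClosure _ (Or.inl ha)) (subset_thickClosure _ (Or.inr hc))
  retract_mem X Z hX i r hir := by
    obtain ⟨I, hI, hx⟩ := Set.mem_iUnion₂.1 hX
    exact Set.mem_iUnion₂.2 ⟨I, hI, I.2.1.retract_mem X Z hx i r hir⟩

lemma ind_mem_iff {𝒮 : Set (FGThick C)} (h𝒮 : IndObjFG 𝒮) (I : FGThick C) :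
    I ∈ 𝒮 ↔ I.1 ⊆ ⋃ J ∈ 𝒮, J.1 := by
  constructor
  · intro hI a ha
    exact Set.mem_iUnion₂.2 ⟨I, hI, ha⟩
  · intro h
    obtain ⟨x, hx⟩ := I.2.2
    have hxA : x ∈ ⋃ J ∈ 𝒮, J.1 := h (by rw [hx]; exact mem_thickClosure_self x)
    obtain ⟨J, hJ, hxJ⟩ := Set.mem_iUnion₂.1 hxA
    refine h𝒮.2.1 I J ?_ hJ
    rw [hx]
    exact thickClosure_min J.2.1 (Set.singleton_subset_iff.2 hxJ)

lemma s'_congr {Y : Type w} (s' : FGThick C → Set Y) {I J : FGThick C}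
    (h : I.1 = J.1) : s' I = s' J :=
  congrArg s' (Subtype.ext h)

lemma s'_mono {Y : Type w} {s' : FGThick C → Set Y}
    (hL1 : ∀ I J K : FGThick C, K.1 = thickClosure (I.1 ∪ J.1) → s' K = s' I ∪ s' J)
    {I J : FGThick C} (h : I.1 ⊆ J.1) : s' I ⊆ s' J := by
  have hJ : J.1 = thickClosure (I.1 ∪ J.1) := by
    apply subset_antisymm
    · exact fun a ha => subset_thickClosure _ (Or.inr ha)
    · exact thickClosure_min J.2.1 (Set.union_subset h subset_rfl)
  rw [hL1 I J J hJ]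
  exact Set.subset_union_left

lemma indSub {I : Set C} (hI : IsThickSubcat I) :
    IndObjFG {K : FGThick C | K.1 ⊆ I} := by
  obtain ⟨Z, hZ⟩ := Limits.HasZeroObject.zero (C := C)
  refine ⟨⟨fgOf Z, thickClosure_min hI
      (Set.singleton_subset_iff.2 (hI.zero_mem Z hZ))⟩,
    fun K K' h hK' => h.trans hK', fun K K' K'' hK hK' h => ?_⟩
  rw [Set.mem_setOf_eq, h]
  exact thickClosure_min hI (Set.union_subset hK hK')

end Aux

/-- For a fixed T0 space `Y`, the assignments `Supp ↦ (I ↦ ⋃_{a ∈ I} Supp a)` and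
`Supp' ↦ (a ↦ Supp'(⟨a⟩))` are mutually inverse bijections between support datum
structures of `T` on `Y` and support datum structures of `L_T` on `Y`. -/
theorem stmt_15 (C : Type u) [Category.{v} C] [Preadditive C] [HasZeroObject C]
    [HasShift C ℤ] [∀ n : ℤ, (shiftFunctor C n).Additive] [Pretriangulated C]
    [HasBinaryBiproducts C] (Y : Type w) (tY : TopologicalSpace Y)
    (hT0 : @T0Space Y tY) :
    (∀ s : C → Set Y, IsSuppDatumT C tY s → IsSuppDatumL C tY (toSuppL s)) ∧
    (∀ s' : FGThick C → Set Y, IsSuppDatumL C tY s' → IsSuppDatumT C tY (toSuppT s')) ∧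
    (∀ s : C → Set Y, IsSuppDatumT C tY s → toSuppT (toSuppL s) = s) ∧
    (∀ s' : FGThick C → Set Y, IsSuppDatumL C tY s' → toSuppL (toSuppT s') = s') := by
  refine ⟨?_, ?_, ?_, ?_⟩
  · -- T-datum gives L-datum
    rintro s ⟨h1, h2, h3, h4, h5⟩
    refine ⟨?_, ?_, ?_⟩
    · -- additivity on joins
      rintro I J K hK
      obtain ⟨x, hx⟩ := I.2.2
      have hxI : x ∈ I.1 := by rw [hx]; exact mem_thickClosure_self x
      apply subset_antisymm
      · refine Set.iUnion₂_subset fun a ha => ?_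
        rw [hK] at ha
        refine thickClosure_min (thick_supp_le h1 h2 h3 (toSuppL s I ∪ toSuppL s J)
          ⟨x, (Set.subset_iUnion₂ (s := fun a _ => s a) x hxI).trans
            Set.subset_union_left⟩) ?_ ha
        rintro b (hb | hb)
        · exact (Set.subset_iUnion₂ (s := fun a _ => s a) b hb).trans
            Set.subset_union_left
        · exact (Set.subset_iUnion₂ (s := fun a _ => s a) b hb).trans
            Set.subset_union_right
      · have hIK : I.1 ⊆ K.1 := by
          rw [hK]; exact fun a ha => subset_thickClosure _ (Or.inl ha)
        have hJK : J.1 ⊆ K.1 := by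
          rw [hK]; exact fun a ha => subset_thickClosure _ (Or.inr ha)
        refine Set.union_subset ?_ ?_ <;>
          exact Set.iUnion₂_subset fun a ha =>
            Set.subset_iUnion₂ (s := fun a _ => s a) a (by first | exact hIK ha | exact hJK ha)
    · -- injectivity on ind-objects
      rintro 𝒮 𝒯 h𝒮 h𝒯 heq
      have key : ∀ 𝒰 : Set (FGThick C),
          (⋃ I ∈ 𝒰, toSuppL s I) = ⋃ a ∈ ⋃ I ∈ 𝒰, I.1, s a := by
        intro 𝒰
        ext y
        simp only [toSuppL, Set.mem_iUnion]
        tauto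
      have hA : (⋃ I ∈ 𝒮, I.1) = ⋃ I ∈ 𝒯, I.1 := by
        by_contra hne
        exact h4 _ _ (indUnion_thick h𝒮) (indUnion_thick h𝒯) hne
          (by rw [← key, ← key, heq])
      ext I
      rw [ind_mem_iff h𝒮, ind_mem_iff h𝒯, hA]
    · -- topology
      rw [h5]
      congr 1
      ext U
      constructor
      · rintro ⟨a, rfl⟩
        refine ⟨fgOf a, ?_⟩
        have : toSuppL s (fgOf a) = s a := suppUnion_fg h1 h2 h3 a
        rw [this]
      · rintro ⟨I, rfl⟩
        obtain ⟨x, hx⟩ := I.2.2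
        refine ⟨x, ?_⟩
        have : toSuppL s I = s x := by
          show (⋃ a ∈ I.1, s a) = s x
          rw [hx]
          exact suppUnion_fg h1 h2 h3 x
        rw [this]
  · -- L-datum gives T-datum
    rintro s' ⟨hL1, hL2, hL3⟩
    refine ⟨?_, ?_, ?_, ?_, ?_⟩
    · -- shift invariance
      intro a
      refine s'_congr s' (subset_antisymm ?_ ?_)
      · refine thickClosure_min (thickClosure_isThick _)
          (Set.singleton_subset_iff.2 ?_)
        exact (thickClosure_isThick _).iso_mem
          ((shiftFunctorCompIsoId C (1 : ℤ) (-1) (by ring)).app a)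
          ((thickClosure_isThick _).shift_mem _ (-1) (mem_thickClosure_self _))
      · refine thickClosure_min (thickClosure_isThick _)
          (Set.singleton_subset_iff.2 ?_)
        exact (thickClosure_isThick _).shift_mem a 1 (mem_thickClosure_self a)
    · -- biproducts
      intro a b
      exact hL1 (fgOf a) (fgOf b) (fgOf (a ⊞ b)) (join_eq a b).symm
    · -- triangles
      intro T hT
      have h13 := hL1 (fgOf T.obj₁) (fgOf T.obj₃) (fgOf (T.obj₁ ⊞ T.obj₃))
        (join_eq T.obj₁ T.obj₃).symm
      show toSuppT s' T.obj₂ ⊆ toSuppT s' T.obj₁ ∪ toSuppT s' T.obj₃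
      rw [show toSuppT s' T.obj₁ ∪ toSuppT s' T.obj₃ =
        s' (fgOf (T.obj₁ ⊞ T.obj₃)) from h13.symm]
      refine s'_mono hL1 ?_
      refine thickClosure_min (thickClosure_isThick _)
        (Set.singleton_subset_iff.2 ?_)
      refine (thickClosure_isThick _).ext_mem T hT ?_ ?_
      · exact (thickClosure_isThick _).retract_mem (T.obj₁ ⊞ T.obj₃) T.obj₁
          (mem_thickClosure_self _) biprod.inl biprod.fst biprod.inl_fst
      · exact (thickClosure_isThick _).retract_mem (T.obj₁ ⊞ T.obj₃) T.obj₃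
          (mem_thickClosure_self _) biprod.inr biprod.snd biprod.inr_snd
    · -- injectivity on thick subcategories
      intro I J hI hJ hne heq
      apply hne
      have hunion : ∀ (I : Set C), IsThickSubcat I →
          (⋃ K ∈ {K : FGThick C | K.1 ⊆ I}, s' K) = ⋃ a ∈ I, toSuppT s' a := by
        intro I hI
        apply subset_antisymm
        · refine Set.iUnion₂_subset fun K hK => ?_
          obtain ⟨x, hx⟩ := K.2.2
          have hxI : x ∈ I := hK (by rw [hx]; exact mem_thickClosure_self x)
          rw [show s' K = toSuppT s' x from s'_congr s' hx]
          exact Set.subset_iUnion₂ (s := fun a _ => toSuppT s' a) x hxI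
        · refine Set.iUnion₂_subset fun a ha => ?_
          exact Set.subset_iUnion₂ (s := fun K _ => s' K) (fgOf a)
            (thickClosure_min hI (Set.singleton_subset_iff.2 ha))
      have hSS := hL2 _ _ (indSub hI) (indSub hJ)
        (by rw [hunion I hI, hunion J hJ, heq])
      apply subset_antisymm <;> intro a ha
      · have h1 : fgOf a ∈ {K : FGThick C | K.1 ⊆ I} :=
          thickClosure_min hI (Set.singleton_subset_iff.2 ha)
        rw [hSS] at h1
        exact h1 (mem_thickClosure_self a)
      · have h1 : fgOf a ∈ {K : FGThick C | K.1 ⊆ J} :=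
          thickClosure_min hJ (Set.singleton_subset_iff.2 ha)
        rw [← hSS] at h1
        exact h1 (mem_thickClosure_self a)
    · -- topology
      rw [hL3]
      congr 1
      ext U
      constructor
      · rintro ⟨I, rfl⟩
        obtain ⟨x, hx⟩ := I.2.2
        refine ⟨x, ?_⟩
        rw [show toSuppT s' x = s' I from s'_congr s' hx.symm]
      · rintro ⟨a, rfl⟩
        exact ⟨fgOf a, rfl⟩
  · -- round trip on T
    rintro s ⟨h1, h2, h3, h4, h5⟩
    funext a
    exact suppUnion_fg h1 h2 h3 a
  · -- round trip on L
    rintro s' ⟨hL1, hL2, hL3⟩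
    funext I
    obtain ⟨x, hx⟩ := I.2.2
    apply subset_antisymm
    · refine Set.iUnion₂_subset fun a ha => ?_
      exact s'_mono hL1 (thickClosure_min I.2.1 (Set.singleton_subset_iff.2 ha))
    · rw [show s' I = toSuppT s' x from s'_congr s' hx]
      exact Set.subset_iUnion₂ (s := fun a _ => toSuppT s' a) x
        (by rw [hx]; exact mem_thickClosure_self x)
end

section
/- Let Y be a noetherian T0 topological space and let Φ be a collection of specialization-closed subsets of Y satisfying: (a) Y ∈ Φ; (b) if Z ⊆ Z' are specialization-closed subsets and Z ∈ Φ, then Z' ∈ Φ; (c) if Z and W are closed subsets both belonging to Φ, then Z ∩ W ∈ Φ; (d) for every family {Z_i} of specialization-closed subsets with ∪_i Z_i ∈ Φ, there exists some i with Z_i ∈ Φ. Then there exists a unique point z₀ ∈ Y such that for every specialization-closed subset Z ⊆ Y: Z ∈ Φ if and only if z₀ ∈ Z. -/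
/-- Let `Y` be a noetherian T0 space and `Φ` a collection of specialization-closed
subsets of `Y` such that: (a) `Y ∈ Φ`; (b) `Φ` is upward closed among
specialization-closed subsets; (c) `Φ` is closed under intersections of two closed
members; (d) if a union of a family of specialization-closed sets lies in `Φ`, then
some member of the family lies in `Φ`.  Then there is a unique point `z₀ ∈ Y` with:
for every specialization-closed `Z ⊆ Y`, `Z ∈ Φ ↔ z₀ ∈ Z`. -/
theorem stmt_16 (Y : Type*) [TopologicalSpace Y] [TopologicalSpace.NoetherianSpace Y]
    [T0Space Y] (Φ : Set (Set Y))
    (hΦ : ∀ Z ∈ Φ, StableUnderSpecialization Z)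
    (ha : Set.univ ∈ Φ)
    (hb : ∀ Z Z' : Set Y, StableUnderSpecialization Z' → Z ⊆ Z' → Z ∈ Φ → Z' ∈ Φ)
    (hc : ∀ Z W : Set Y, IsClosed Z → IsClosed W → Z ∈ Φ → W ∈ Φ → Z ∩ W ∈ Φ)
    (hd : ∀ 𝒵 : Set (Set Y), (∀ Z ∈ 𝒵, StableUnderSpecialization Z) →
      ⋃₀ 𝒵 ∈ Φ → ∃ Z ∈ 𝒵, Z ∈ Φ) :
    ∃! z₀ : Y, ∀ Z : Set Y, StableUnderSpecialization Z → (Z ∈ Φ ↔ z₀ ∈ Z) := by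
  -- find a minimal closed member of Φ
  obtain ⟨Z₀, hZ₀ : (Z₀ : Set Y) ∈ Φ, hmin⟩ :=
    (wellFounded_lt (α := TopologicalSpace.Closeds Y)).has_min
      {s : TopologicalSpace.Closeds Y | (s : Set Y) ∈ Φ}
      ⟨⊤, by simpa using ha⟩
  -- key minimality fact for sets
  have hmin' : ∀ W : Set Y, IsClosed W → W ∈ Φ → W ⊆ (Z₀ : Set Y) → W = Z₀ := by
    intro W hW hWΦ hsub
    have := hmin ⟨W, hW⟩ hWΦ
    have : ¬ (⟨W, hW⟩ : TopologicalSpace.Closeds Y) < Z₀ := this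
    have heq : (⟨W, hW⟩ : TopologicalSpace.Closeds Y) = Z₀ := by
      rcases lt_or_eq_of_le (show (⟨W, hW⟩ : TopologicalSpace.Closeds Y) ≤ Z₀ from hsub) with h | h
      · exact absurd h this
      · exact h
    exact congrArg TopologicalSpace.Closeds.carrier heq
  -- Z₀ is the closure of a point
  have hclos : ∀ y : Y, y ∈ (Z₀ : Set Y) → closure {y} ⊆ (Z₀ : Set Y) := fun y hy =>
    Z₀.isClosed.closure_subset_iff.mpr (Set.singleton_subset_iff.mpr hy)
  have hcover : (Z₀ : Set Y) = ⋃₀ ((fun y => closure {y}) '' (Z₀ : Set Y)) := by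
    apply Set.Subset.antisymm
    · intro y hy
      exact ⟨closure {y}, ⟨y, hy, rfl⟩, subset_closure rfl⟩
    · intro x hx
      obtain ⟨_, ⟨y, hy, rfl⟩, hx⟩ := hx
      exact hclos y hy hx
  obtain ⟨_, ⟨z₀, hz₀Z, rfl⟩, hz₀Φ⟩ := hd _ (by
      rintro _ ⟨y, hy, rfl⟩
      exact isClosed_closure.stableUnderSpecialization) (hcover ▸ hZ₀)
  have hZ₀eq : closure {z₀} = (Z₀ : Set Y) :=
    hmin' _ isClosed_closure hz₀Φ (hclos z₀ hz₀Z)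
  -- main property
  have key : ∀ Z : Set Y, StableUnderSpecialization Z → (Z ∈ Φ ↔ z₀ ∈ Z) := by
    intro Z hZ
    constructor
    · intro hZΦ
      have hcov : Z = ⋃₀ ((fun y => closure {y}) '' Z) := by
        apply Set.Subset.antisymm
        · intro y hy; exact ⟨closure {y}, ⟨y, hy, rfl⟩, subset_closure rfl⟩
        · intro x hx
          obtain ⟨_, ⟨y, hy, rfl⟩, hx⟩ := hx
          exact hZ (specializes_iff_mem_closure.mpr hx) hy
      obtain ⟨_, ⟨z, hzZ, rfl⟩, hzΦ⟩ := hd _ (by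
          rintro _ ⟨y, hy, rfl⟩
          exact isClosed_closure.stableUnderSpecialization) (hcov ▸ hZΦ)
      have hint : closure {z} ∩ (Z₀ : Set Y) ∈ Φ :=
        hc _ _ isClosed_closure Z₀.isClosed hzΦ hZ₀
      have : closure {z} ∩ (Z₀ : Set Y) = Z₀ :=
        hmin' _ (isClosed_closure.inter Z₀.isClosed) hint Set.inter_subset_right
      have hz₀mem : z₀ ∈ closure ({z} : Set Y) := by
        rw [← this] at hz₀Z
        exact hz₀Z.1
      exact hZ (specializes_iff_mem_closure.mpr hz₀mem) hzZ
    · intro hz₀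
      exact hb (closure {z₀}) Z hZ
        (by
          intro x hx
          exact hZ (specializes_iff_mem_closure.mpr hx) hz₀) hz₀Φ
  refine ⟨z₀, key, ?_⟩
  intro y hy
  have h1 : closure ({y} : Set Y) ∈ Φ :=
    (hy _ isClosed_closure.stableUnderSpecialization).mpr (subset_closure rfl)
  have h2 : z₀ ∈ closure ({y} : Set Y) :=
    (key _ isClosed_closure.stableUnderSpecialization).mp h1
  have h3 : closure ({z₀} : Set Y) ∈ Φ := hz₀Φ
  have h4 : y ∈ closure ({z₀} : Set Y) :=
    (hy _ isClosed_closure.stableUnderSpecialization).mp h3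
  exact ((specializes_iff_mem_closure.mpr h2).antisymm
    (specializes_iff_mem_closure.mpr h4)).eq
end
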